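/- arXiv:2604.14036 — 10 statements merged into one kernel-verified Lean document; each statement's English description precedes it below -/
import Mathlib

section
/- Let W = w₁w₂… be an infinite word over a finite alphabet S that is not ultimately periodic, and let e ≥ 0 and M ≥ 1 be integers. Then there exist a word U of length e over S, two distinct letters s, s' ∈ S, and a congruence class m̄ modulo M such that both words sU and s'U occur in W at infinitely many positions congruent to m̄ modulo M. -/
/-- If `w` is not ultimately periodic over a finite alphabet, then for all `e, M` there
are a word `U` of length `e`, distinct letters `s ≠ s'` and a congruence class `m` mod `M`
such that `sU` and `s'U` both occur at infinitely many positions in that class. -/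
theorem stmt2 {S : Type*} [Fintype S] (w : ℕ → S)
    (hW : ¬ ∃ N p : ℕ, 1 ≤ p ∧ ∀ k ≥ N, w (k + p) = w k)
    (e M : ℕ) (hM : 1 ≤ M) :
    ∃ (U : Fin e → S) (s s' : S) (m : ℕ), s ≠ s' ∧
      {n : ℕ | n % M = m % M ∧ w n = s ∧ ∀ i : Fin e, w (n + 1 + i) = U i}.Infinite ∧
      {n : ℕ | n % M = m % M ∧ w n = s' ∧ ∀ i : Fin e, w (n + 1 + i) = U i}.Infinite := by
  classical
  by_contra hcon
  push_neg at hcon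
  have hM0 : 0 < M := hM
  -- unboundedness criterion for infinite sets of naturals
  have unb : ∀ (s : Set ℕ), (∀ B, ∃ m ∈ s, B ≤ m) → s.Infinite := by
    intro s hs
    apply Set.infinite_of_not_bddAbove
    rintro ⟨B, hB⟩
    obtain ⟨m, hm, hmB⟩ := hs (B + 1)
    have := hB hm
    omega
  -- the fingerprint function
  set f : ℕ → Fin M × (Fin e → S) × S :=
    fun n => (⟨n % M, Nat.mod_lt n hM0⟩, fun i => w (n + 1 + i), w n) with hf
  have hfe : ∀ k n : ℕ, f k = f n ↔
      (k % M = n % M ∧ (∀ i : Fin e, w (k + 1 + i) = w (n + 1 + i)) ∧ w k = w n) := by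
    intro k n
    simp [hf, Prod.ext_iff, Fin.ext_iff, funext_iff]
  have hbad : {n : ℕ | (f ⁻¹' {f n}).Finite}.Finite := by
    apply Set.Finite.subset (Set.Finite.biUnion
      (Set.toFinite {t : Fin M × (Fin e → S) × S | (f ⁻¹' {t}).Finite}) (fun t ht => ht))
    intro n hn
    exact Set.mem_biUnion hn rfl
  obtain ⟨N0, hN0⟩ := hbad.bddAbove
  set N := N0 + 1 with hN
  have hfib : ∀ n, N ≤ n → (f ⁻¹' {f n}).Infinite := by
    intro n hn
    by_contra hfin
    rw [Set.not_infinite] at hfin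
    have : n ≤ N0 := hN0 hfin
    omega
  -- Step A : the letter is determined by residue and window, beyond N
  have SA : ∀ n, N ≤ n → ∀ n', N ≤ n' → n % M = n' % M →
      (∀ i : Fin e, w (n + 1 + i) = w (n' + 1 + i)) → w n = w n' := by
    intro n hn n' hn' hmod hwin
    by_contra hne
    have h1 : {k : ℕ | k % M = n % M ∧ w k = w n ∧
        ∀ i : Fin e, w (k + 1 + i) = w (n + 1 + i)}.Infinite := by
      apply (hfib n hn).mono
      intro k hk
      rw [Set.mem_preimage, Set.mem_singleton_iff, hfe] at hk
      exact ⟨hk.1, hk.2.2, hk.2.1⟩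
    have h1' : {k : ℕ | k % M = n % M ∧ w k = w n ∧
        ∀ i : Fin e, w (k + 1 + i) = (fun i : Fin e => w (n + 1 + i)) i}.Infinite := h1
    have h2 := hcon (fun i : Fin e => w (n + 1 + i)) (w n) (w n') n hne h1'
    have h3 : f ⁻¹' {f n'} ⊆ {k : ℕ | k % M = n % M ∧ w k = w n' ∧
        ∀ i : Fin e, w (k + 1 + i) = (fun i : Fin e => w (n + 1 + i)) i} := by
      intro k hk
      rw [Set.mem_preimage, Set.mem_singleton_iff, hfe] at hk
      exact ⟨hk.1.trans hmod.symm, hk.2.2, fun i => (hk.2.1 i).trans (hwin i).symm⟩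
    exact ((hfib n' hn').mono h3) h2
  -- the state
  set x : ℕ → Fin M × (Fin (e + 1) → S) :=
    fun n => (⟨n % M, Nat.mod_lt n hM0⟩, fun i => w (n + i)) with hx
  have hmodpred : ∀ a b : ℕ, (a + 1) % M = (b + 1) % M → a % M = b % M := by
    intro a b h
    have key : ∀ c : ℕ, c % M = ((c + 1) % M + (M - 1)) % M := by
      intro c
      conv_lhs => rw [← Nat.add_mod_right c M]
      rw [Nat.mod_add_mod]
      congr 1
      omega
    rw [key a, key b, h]
  -- backward determinism
  have hback : ∀ n, N ≤ n → ∀ n', N ≤ n' → x (n + 1) = x (n' + 1) → x n = x n' := by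
    intro n hn n' hn' hxe
    have hmod1 : (n + 1) % M = (n' + 1) % M := congrArg (fun y => y.1.1) hxe
    have hwin1 : ∀ i : Fin (e + 1), w (n + 1 + i) = w (n' + 1 + i) := by
      intro i
      exact congrArg (fun y => y.2 i) hxe
    have hmod0 : n % M = n' % M := hmodpred n n' hmod1
    have hw0 : w n = w n' := SA n hn n' hn' hmod0 (fun i => hwin1 ⟨i.1, by omega⟩)
    have hsnd : (fun i : Fin (e + 1) => w (n + i)) = (fun i : Fin (e + 1) => w (n' + i)) := by
      funext i
      obtain ⟨iv, hiv⟩ := i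
      match iv, hiv with
      | 0, _ => simpa using hw0
      | Nat.succ j, hiv =>
        have hj : w (n + 1 + j) = w (n' + 1 + j) := hwin1 ⟨j, by omega⟩
        show w (n + (j + 1)) = w (n' + (j + 1))
        rw [show n + (j + 1) = n + 1 + j from by omega,
          show n' + (j + 1) = n' + 1 + j from by omega]
        exact hj
    show (_, _) = (_, _)
    rw [Prod.ext_iff]
    exact ⟨Fin.ext hmod0, hsnd⟩
  -- the backward transition function
  set F : (Fin M × (Fin (e + 1) → S)) → (Fin M × (Fin (e + 1) → S)) :=
    fun a => if h : ∃ n, N ≤ n ∧ x (n + 1) = a then x h.choose else a with hF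
  have hFx : ∀ n, N ≤ n → F (x (n + 1)) = x n := by
    intro n hn
    have h : ∃ m, N ≤ m ∧ x (m + 1) = x (n + 1) := ⟨n, hn, rfl⟩
    simp only [hF, dif_pos h]
    exact hback h.choose h.choose_spec.1 n hn h.choose_spec.2
  have hiter : ∀ n, N ≤ n → ∀ j, x n = F^[j] (x (n + j)) := by
    intro n hn j
    induction j with
    | zero => simp
    | succ j ih =>
      have h2 : F (x (n + j + 1)) = x (n + j) := hFx (n + j) (by omega)
      rw [show n + (j + 1) = n + j + 1 from rfl, Function.iterate_succ_apply, h2]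
      exact ih
  -- pigeonhole
  have pig : ∀ (s : Set ℕ) (g : ℕ → Fin M × (Fin (e + 1) → S)), s.Infinite →
      ∃ c, {m : ℕ | m ∈ s ∧ g m = c}.Infinite := by
    intro s g hs
    by_contra hc
    push_neg at hc
    apply hs
    apply Set.Finite.subset (Set.Finite.biUnion (Set.finite_univ
      (α := Fin M × (Fin (e + 1) → S))) (fun c _ => hc c))
    intro m hm
    exact Set.mem_biUnion (Set.mem_univ (g m)) ⟨hm, rfl⟩
  -- a recurrent value
  obtain ⟨a, ha⟩ := Finite.exists_infinite_fiber (fun k => x (N + k))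
  rw [Set.infinite_coe_iff] at ha
  have haN : ∀ B, ∃ k, B ≤ k ∧ N ≤ k ∧ x k = a := by
    intro B
    obtain ⟨k, hk, hkB⟩ := ha.exists_gt B
    have hk' : x (N + k) = a := hk
    exact ⟨N + k, by omega, by omega, hk'⟩
  set T : Set (Fin M × (Fin (e + 1) → S)) := {b | {n | N ≤ n ∧ x n = b}.Infinite} with hT
  have hxT : ∀ n, N ≤ n → x n ∈ T := by
    intro n hn
    obtain ⟨k, hkn, hkN, hka⟩ := haN n
    show {m | N ≤ m ∧ x m = x n}.Infinite
    apply unb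
    intro B
    obtain ⟨k', hk'B, hk'N, hk'a⟩ := haN (B + k)
    refine ⟨n + (k' - k), ⟨by omega, ?_⟩, by omega⟩
    have h1 : x n = F^[k - n] (x k) := by
      have := hiter n hn (k - n)
      rwa [show n + (k - n) = k from by omega] at this
    have h2 : x (n + (k' - k)) = F^[k - n] (x k') := by
      have := hiter (n + (k' - k)) (by omega) (k - n)
      rwa [show n + (k' - k) + (k - n) = k' from by omega] at this
    rw [h1, h2, hka, hk'a]
  have hmapsTo : Set.MapsTo F T T := by
    intro b hb
    have hb' : {n | N ≤ n ∧ x n = b}.Infinite := hb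
    show {n | N ≤ n ∧ x n = F b}.Infinite
    apply unb
    intro B
    obtain ⟨m, hm, hmB⟩ := hb'.exists_gt (B + N)
    obtain ⟨hmN, hmb⟩ := hm
    refine ⟨m - 1, ⟨by omega, ?_⟩, by omega⟩
    have := hFx (m - 1) (by omega)
    rw [show m - 1 + 1 = m from by omega, hmb] at this
    exact this.symm
  have hsurj : Set.SurjOn F T T := by
    intro b hb
    have hb' : {n | N ≤ n ∧ x n = b}.Infinite := hb
    obtain ⟨c, hc⟩ := pig {n | N ≤ n ∧ x n = b} (fun m => x (m + 1)) hb'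
    obtain ⟨m, ⟨hmN, hmb⟩, hmc⟩ := hc.nonempty
    refine ⟨c, ?_, ?_⟩
    · show {n | N ≤ n ∧ x n = c}.Infinite
      apply unb
      intro B
      obtain ⟨m', hm', hm'B⟩ := hc.exists_gt B
      obtain ⟨⟨hm'N, _⟩, hm'c⟩ := hm'
      exact ⟨m' + 1, ⟨by omega, hm'c⟩, by omega⟩
    · rw [← hmc, hFx m hmN, hmb]
  have hinj : Set.InjOn F T :=
    ((Set.Finite.surjOn_iff_bijOn_of_mapsTo (Set.toFinite T) hmapsTo).mp hsurj).injOn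
  have hfwd : ∀ n, N ≤ n → ∀ n', N ≤ n' → x n = x n' → ∀ j, x (n + j) = x (n' + j) := by
    intro n hn n' hn' hxe j
    induction j with
    | zero => simpa using hxe
    | succ j ih =>
      have h1 : F (x (n + j + 1)) = F (x (n' + j + 1)) := by
        rw [hFx (n + j) (by omega), hFx (n' + j) (by omega)]
        exact ih
      exact hinj (hxT (n + j + 1) (by omega)) (hxT (n' + j + 1) (by omega)) h1
  obtain ⟨k1, _, hk1N, hk1a⟩ := haN N
  obtain ⟨k2, hk2g, hk2N, hk2a⟩ := haN (k1 + 1)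
  apply hW
  refine ⟨k1, k2 - k1, by omega, ?_⟩
  intro k hk
  have h := hfwd k1 hk1N k2 hk2N (by rw [hk1a, hk2a]) (k - k1)
  rw [show k1 + (k - k1) = k from by omega,
    show k2 + (k - k1) = k + (k2 - k1) from by omega] at h
  have h0 := congrArg (fun y => y.2 (0 : Fin (e + 1))) h
  simpa [hx] using h0.symm
end

section
/- Let W = w₁w₂… be an infinite word over a finite alphabet S that is not ultimately periodic, and let e ≥ 0 and M ≥ 1 be integers. Then there exist a word V of length e over S, two distinct letters t, t' ∈ S, and a congruence class n̄ modulo M such that both words Vt and Vt' occur in W at infinitely many positions congruent to n̄ modulo M. -/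
/-- If `w` is not ultimately periodic over a finite alphabet, then for all `e, M` there
are a word `V` of length `e`, distinct letters `t ≠ t'` and a congruence class `n₀` mod `M`
such that `Vt` and `Vt'` both occur at infinitely many positions in that class. -/
theorem stmt3 {S : Type*} [Fintype S] (w : ℕ → S)
    (hW : ¬ ∃ N p : ℕ, 1 ≤ p ∧ ∀ k ≥ N, w (k + p) = w k)
    (e M : ℕ) (hM : 1 ≤ M) :
    ∃ (V : Fin e → S) (t t' : S) (m : ℕ), t ≠ t' ∧
      {n : ℕ | n % M = m % M ∧ (∀ i : Fin e, w (n + i) = V i) ∧ w (n + e) = t}.Infinite ∧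
      {n : ℕ | n % M = m % M ∧ (∀ i : Fin e, w (n + i) = V i) ∧ w (n + e) = t'}.Infinite := by
  classical
  haveI : NeZero M := ⟨by omega⟩
  by_contra hcon
  push_neg at hcon
  apply hW
  set σ : ℕ → ZMod M × (Fin e → S) := fun n => ((n : ZMod M), fun i => w (n + i)) with hσ
  have subsing : ∀ (s : ZMod M × (Fin e → S)) (t t' : S), t ≠ t' →
      {n | σ n = s ∧ w (n + e) = t}.Infinite →
      ¬ {n | σ n = s ∧ w (n + e) = t'}.Infinite := by
    rintro ⟨c, V⟩ t t' htt h1 h2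
    have hcast : ∀ n : ℕ, (n : ZMod M) = c ↔ n % M = c.val % M := by
      intro n
      rw [show c = ((c.val : ℕ) : ZMod M) from (ZMod.natCast_rightInverse c).symm]
      rw [ZMod.natCast_eq_natCast_iff']
      simp [ZMod.val_natCast]
    have hsets : ∀ t0 : S, {n | σ n = (c, V) ∧ w (n + e) = t0} =
        {n : ℕ | n % M = c.val % M ∧ (∀ i : Fin e, w (n + i) = V i) ∧ w (n + e) = t0} := by
      intro t0; ext n
      simp only [Set.mem_setOf_eq, hσ, Prod.mk.injEq, funext_iff]
      constructor
      · rintro ⟨⟨hc, hv⟩, ht⟩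
        exact ⟨(hcast n).1 hc, hv, ht⟩
      · rintro ⟨hc, hv, ht⟩
        exact ⟨⟨(hcast n).2 hc, hv⟩, ht⟩
    exact absurd (hcon V t t' c.val htt (hsets t ▸ h1)) (hsets t' ▸ h2)
  have key : ∀ s : ZMod M × (Fin e → S), ∃ (t : S) (N : ℕ),
      ∀ n, N ≤ n → σ n = s → w (n + e) = t := by
    intro s
    by_cases hex : ∃ t, {n | σ n = s ∧ w (n + e) = t}.Infinite
    · obtain ⟨t, ht⟩ := hex
      have hfin : {n | σ n = s ∧ w (n + e) ≠ t}.Finite := by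
        have hsub : {n | σ n = s ∧ w (n + e) ≠ t} ⊆
            ⋃ t' ∈ {t' : S | t' ≠ t}, {n | σ n = s ∧ w (n + e) = t'} := by
          rintro n ⟨hn1, hn2⟩
          exact Set.mem_biUnion hn2 ⟨hn1, rfl⟩
        refine Set.Finite.subset (Set.Finite.biUnion (Set.toFinite _) ?_) hsub
        intro t' ht'
        exact Set.not_infinite.1 (subsing s t t' (Ne.symm ht') ht)
      obtain ⟨B, hB⟩ := hfin.bddAbove
      refine ⟨t, B + 1, fun n hn hs => ?_⟩
      by_contra hne
      have : n ≤ B := hB ⟨hs, hne⟩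
      omega
    · push_neg at hex
      have hfin : {n | σ n = s}.Finite := by
        have heq : {n | σ n = s} = ⋃ t, {n | σ n = s ∧ w (n + e) = t} := by
          ext n
          simp only [Set.mem_setOf_eq, Set.mem_iUnion]
          exact ⟨fun h => ⟨_, h, rfl⟩, fun ⟨_, h, _⟩ => h⟩
        rw [heq]
        exact Set.finite_iUnion fun t => hex t
      obtain ⟨B, hB⟩ := hfin.bddAbove
      exact ⟨w 0, B + 1, fun n hn hs => absurd (hB hs) (by omega)⟩
  choose f Nf hNf using key
  set N : ℕ := Finset.univ.sup Nf with hNdef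
  have hN : ∀ n, N ≤ n → w (n + e) = f (σ n) :=
    fun n hn => hNf (σ n) n (le_trans (Finset.le_sup (Finset.mem_univ _)) hn) rfl
  have hdet : ∀ m n, N ≤ m → N ≤ n → σ m = σ n → σ (m + 1) = σ (n + 1) := by
    intro m n hm hn h
    have h1 : ((m : ZMod M)) = (n : ZMod M) := congrArg Prod.fst h
    have h2 : ∀ i : Fin e, w (m + i) = w (n + i) := fun i => congrFun (congrArg Prod.snd h) i
    have h3 : w (m + e) = w (n + e) := by rw [hN m hm, hN n hn, h]
    have hfst : ((m + 1 : ℕ) : ZMod M) = ((n + 1 : ℕ) : ZMod M) := by push_cast; rw [h1]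
    have hsnd : (fun i : Fin e => w (m + 1 + i)) = fun i : Fin e => w (n + 1 + i) := by
      funext i
      rcases lt_or_ge ((i : ℕ) + 1) e with hi | hi
      · have := h2 ⟨(i : ℕ) + 1, hi⟩
        simpa [show m + 1 + (i : ℕ) = m + ((i : ℕ) + 1) from by omega,
          show n + 1 + (i : ℕ) = n + ((i : ℕ) + 1) from by omega] using this
      · have hie : (i : ℕ) + 1 = e := by have := i.isLt; omega
        rw [show m + 1 + (i : ℕ) = m + e from by omega,
          show n + 1 + (i : ℕ) = n + e from by omega]
        exact h3
    show ((((m + 1 : ℕ) : ZMod M), fun i : Fin e => w (m + 1 + i)) :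
        ZMod M × (Fin e → S)) = (((n + 1 : ℕ) : ZMod M), fun i : Fin e => w (n + 1 + i))
    rw [hfst, hsnd]
  have main : ∀ a b : ℕ, a < b → σ (N + a) = σ (N + b) →
      ∃ N' p : ℕ, 1 ≤ p ∧ ∀ k ≥ N', w (k + p) = w k := by
    intro a b hlt hs
    have hind : ∀ k, σ (N + a + k) = σ (N + b + k) := by
      intro k
      induction k with
      | zero => simpa using hs
      | succ k ih =>
          have := hdet (N + a + k) (N + b + k) (by omega) (by omega) ih
          rw [show N + a + (k + 1) = N + a + k + 1 from by omega,
            show N + b + (k + 1) = N + b + k + 1 from by omega]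
          exact this
    refine ⟨N + a + e, b - a, by omega, fun k hk => ?_⟩
    obtain ⟨j, rfl⟩ : ∃ j, k = N + a + e + j := ⟨k - (N + a + e), by omega⟩
    have h1 : w (N + a + j + e) = f (σ (N + a + j)) := hN _ (by omega)
    have h2 : w (N + b + j + e) = f (σ (N + b + j)) := hN _ (by omega)
    have h3 : σ (N + a + j) = σ (N + b + j) := hind j
    calc w (N + a + e + j + (b - a)) = w (N + b + j + e) := by
            rw [show N + a + e + j + (b - a) = N + b + j + e from by omega]
      _ = w (N + a + j + e) := by rw [h1, h2, h3]
      _ = w (N + a + e + j) := by rw [show N + a + j + e = N + a + e + j from by omega]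
  obtain ⟨a, b, hab, heq⟩ := Finite.exists_ne_map_eq_of_infinite (fun k : ℕ => σ (N + k))
  rcases Nat.lt_or_gt_of_ne hab with h | h
  · exact main a b h heq
  · exact main b a h heq.symm
end

section
/- Let α ∈ ℂ be an algebraic number all of whose Galois conjugates have modulus ≤ 1. If some Galois conjugate of α has modulus exactly 1, then all Galois conjugates of α have modulus exactly 1. -/
open Polynomial

private lemma stmt4_aux (α : ℂ) (hα : IsAlgebraic ℚ α)
    (hex : ∃ β : ℂ, Polynomial.aeval β (minpoly ℚ α) = 0 ∧ ‖β‖ = 1) :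
    ∀ γ : ℂ, Polynomial.aeval γ (minpoly ℚ α) = 0 →
      γ ≠ 0 ∧ Polynomial.aeval γ⁻¹ (minpoly ℚ α) = 0 := by
  obtain ⟨β, hβ, hβ1⟩ := hex
  set p := minpoly ℚ α with hp
  have hmonic : p.Monic := minpoly.monic hα.isIntegral
  have hirr : Irreducible p := minpoly.irreducible hα.isIntegral
  have hβne : β ≠ 0 := by
    intro h; rw [h] at hβ1; simp at hβ1
  have hpβ : p = minpoly ℚ β := minpoly.eq_of_irreducible_of_monic hirr hβ hmonic
  -- conjugate of β is a root
  have hconj : Polynomial.aeval ((starRingEnd ℂ) β) p = 0 := by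
    have : (starRingEnd ℂ) (Polynomial.aeval β p) = 0 := by rw [hβ]; simp
    rwa [Polynomial.aeval_def, Polynomial.hom_eval₂, show
      (starRingEnd ℂ).comp (algebraMap ℚ ℂ) = algebraMap ℚ ℂ by
        ext; simp, ← Polynomial.aeval_def] at this
  have hinv : Polynomial.aeval β⁻¹ p = 0 := by
    rwa [Complex.inv_eq_conj (by simpa using hβ1)]
  -- β is a root of reverse p
  have : Invertible β⁻¹ := invertibleOfNonzero (inv_ne_zero hβne)
  have hrev : Polynomial.aeval β p.reverse = 0 := by
    have h := (Polynomial.eval₂_reverse_eq_zero_iff (algebraMap ℚ ℂ) β⁻¹ p).mpr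
      (by rwa [Polynomial.aeval_def] at hinv)
    rw [invOf_eq_inv, inv_inv] at h
    rwa [Polynomial.aeval_def]
  have hdvd : p ∣ p.reverse := by
    rw [hpβ]; exact minpoly.dvd ℚ β (by rwa [← hpβ])
  intro γ hγ
  have hγne : γ ≠ 0 := by
    intro h
    subst h
    have hpX : p = minpoly ℚ (0 : ℂ) :=
      minpoly.eq_of_irreducible_of_monic hirr (by simpa using hγ) hmonic
    rw [hpX, minpoly.zero] at hβ
    simp at hβ
    exact hβne hβ
  refine ⟨hγne, ?_⟩
  obtain ⟨c, hc⟩ := hdvd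
  have hrevγ : Polynomial.aeval γ p.reverse = 0 := by
    rw [hc, map_mul, hγ, zero_mul]
  have : Invertible γ⁻¹ := invertibleOfNonzero (inv_ne_zero hγne)
  have h := (Polynomial.eval₂_reverse_eq_zero_iff (algebraMap ℚ ℂ) γ⁻¹ p).mp
  rw [invOf_eq_inv, inv_inv] at h
  rw [Polynomial.aeval_def]
  exact h (by rwa [Polynomial.aeval_def] at hrevγ)

/-- If all Galois conjugates of an algebraic number have modulus ≤ 1 and one of them has
modulus 1, then all of them have modulus 1. -/
theorem stmt4 (α : ℂ) (hα : IsAlgebraic ℚ α)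
    (hle : ∀ β : ℂ, Polynomial.aeval β (minpoly ℚ α) = 0 → ‖β‖ ≤ 1)
    (hex : ∃ β : ℂ, Polynomial.aeval β (minpoly ℚ α) = 0 ∧ ‖β‖ = 1) :
    ∀ β : ℂ, Polynomial.aeval β (minpoly ℚ α) = 0 → ‖β‖ = 1 := by
  intro γ hγ
  obtain ⟨hγ0, hγinv⟩ := stmt4_aux α hα hex γ hγ
  have h1 := hle γ hγ
  have h2 := hle γ⁻¹ hγinv
  rw [norm_inv] at h2
  have hpos : 0 < ‖γ‖ := norm_pos_iff.mpr hγ0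
  have : (1 : ℝ) ≤ ‖γ‖ := by
    rw [inv_le_one_iff₀] at h2
    rcases h2 with h | h
    · linarith
    · exact h
  linarith
end

section
/- Every algebraic number α ∈ ℂ falls into exactly one of the following three mutually exclusive categories: (i) α has a Galois conjugate of modulus > 1; (ii) all Galois conjugates of α have modulus exactly 1; (iii) all Galois conjugates of α have modulus strictly less than 1. -/
open Polynomial

/-- Conjugation commutes with evaluation of a rational polynomial. -/
lemma aeval_conj_rat (p : ℚ[X]) (z : ℂ) :
    Polynomial.aeval ((starRingEnd ℂ) z) p = (starRingEnd ℂ) (Polynomial.aeval z p) := by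
  rw [← Polynomial.aeval_map_algebraMap ℝ, ← Polynomial.aeval_map_algebraMap ℝ (x := z)]
  exact Polynomial.aeval_conj _ _

/-- If all roots of the minimal polynomial have modulus ≤ 1 and some root has
modulus 1, then every root has modulus 1. -/
lemma key (α : ℂ) (hα : IsAlgebraic ℚ α)
    (hle : ∀ β : ℂ, Polynomial.aeval β (minpoly ℚ α) = 0 → ‖β‖ ≤ 1)
    {β : ℂ} (hβ0 : Polynomial.aeval β (minpoly ℚ α) = 0) (hβ1 : ‖β‖ = 1)
    {δ : ℂ} (hδ0 : Polynomial.aeval δ (minpoly ℚ α) = 0) : ‖δ‖ = 1 := by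
  by_contra hδ1
  have hδlt : ‖δ‖ < 1 := lt_of_le_of_ne (hle δ hδ0) hδ1
  set p := minpoly ℚ α with hp
  have hint : IsIntegral ℚ α := hα.isIntegral
  have hirr : Irreducible p := minpoly.irreducible hint
  have hmonic : p.Monic := minpoly.monic hint
  have hβne : β ≠ 0 := by
    intro h; rw [h] at hβ1; simp at hβ1
  -- 0 is not a root of p
  have h0 : Polynomial.aeval (0 : ℂ) p ≠ 0 := by
    intro h
    have := minpoly.eq_of_irreducible_of_monic hirr h hmonic
    rw [minpoly.zero] at this
    rw [this] at hβ0
    simp at hβ0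
    exact hβne hβ0
  have hc0 : p.coeff 0 ≠ 0 := by
    intro h
    apply h0
    rw [Polynomial.aeval_def, Polynomial.eval₂_at_zero, h, map_zero]
  -- β⁻¹ = conj β is a root of p
  have hβinv : Polynomial.aeval β⁻¹ p = 0 := by
    have hconj : (starRingEnd ℂ) β = β⁻¹ := by
      rw [Complex.inv_def]
      have : Complex.normSq β = 1 := by
        rw [← Complex.sq_norm, hβ1]; norm_num
      rw [this]; simp
    rw [← hconj, aeval_conj_rat, hβ0, map_zero]
  -- β⁻¹ is a root of reverse p
  have hβinvrev : Polynomial.aeval β⁻¹ p.reverse = 0 := by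
    haveI : Invertible β := invertibleOfNonzero hβne
    have := (Polynomial.eval₂_reverse_eq_zero_iff (algebraMap ℚ ℂ) β p).mpr hβ0
    rwa [invOf_eq_inv, ← Polynomial.aeval_def] at this
  -- hence p divides reverse p
  have hpeq : p = minpoly ℚ β⁻¹ := minpoly.eq_of_irreducible_of_monic hirr hβinv hmonic
  have hdvd : p ∣ p.reverse := by
    have := minpoly.dvd ℚ β⁻¹ hβinvrev
    rwa [← hpeq] at this
  -- degrees agree, so reverse p = p * (a constant)
  have hpne : p ≠ 0 := hmonic.ne_zero
  have hrevne : p.reverse ≠ 0 := by rwa [Ne, Polynomial.reverse_eq_zero]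
  have hdeg : p.reverse.natDegree = p.natDegree := by
    have ht : p.natTrailingDegree = 0 :=
      Polynomial.natTrailingDegree_eq_zero_of_constantCoeff_ne_zero hc0
    rw [Polynomial.reverse_natDegree, ht, Nat.sub_zero]
  obtain ⟨u, hu⟩ := hdvd
  have hudeg : u.natDegree = 0 := by
    have hune : u ≠ 0 := right_ne_zero_of_mul (hu ▸ hrevne)
    have := Polynomial.natDegree_mul hpne hune
    rw [← hu, hdeg] at this
    omega
  -- δ ≠ 0
  have hδne : δ ≠ 0 := by
    intro h; rw [h] at hδ0; exact h0 hδ0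
  -- δ⁻¹ is a root of reverse p, hence of p
  have hδinvrev : Polynomial.aeval δ⁻¹ p.reverse = 0 := by
    haveI : Invertible δ := invertibleOfNonzero hδne
    have := (Polynomial.eval₂_reverse_eq_zero_iff (algebraMap ℚ ℂ) δ p).mpr hδ0
    rwa [invOf_eq_inv, ← Polynomial.aeval_def] at this
  have hune : Polynomial.aeval δ⁻¹ u ≠ 0 := by
    rw [Polynomial.eq_C_of_natDegree_eq_zero hudeg]
    simp only [Polynomial.aeval_C]
    intro h
    have : u.coeff 0 = 0 := by
      exact_mod_cast (_root_.map_eq_zero (algebraMap ℚ ℂ)).mp h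
    apply hrevne
    rw [hu, Polynomial.eq_C_of_natDegree_eq_zero hudeg, this, map_zero, mul_zero]
  have hδinv : Polynomial.aeval δ⁻¹ p = 0 := by
    have := hδinvrev
    rw [hu, map_mul] at this
    exact (mul_eq_zero.mp this).resolve_right hune
  -- contradiction: |δ⁻¹| > 1
  have := hle δ⁻¹ hδinv
  rw [norm_inv] at this
  have habs : ‖δ‖ ≠ 0 := by simpa using hδne
  have : (1 : ℝ) ≤ ‖δ‖ := by
    rw [inv_le_one_iff₀] at this
    rcases this with h | h
    · exact absurd (le_antisymm h (norm_nonneg δ)) habs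
    · exact h
  linarith

/-- Every algebraic number falls into exactly one of three categories:
(i) some Galois conjugate has modulus > 1; (ii) all Galois conjugates have modulus 1;
(iii) all Galois conjugates have modulus < 1. -/
theorem stmt5 (α : ℂ) (hα : IsAlgebraic ℚ α) :
    ((∃ β : ℂ, Polynomial.aeval β (minpoly ℚ α) = 0 ∧ 1 < ‖β‖) ∧
      ¬ (∀ β : ℂ, Polynomial.aeval β (minpoly ℚ α) = 0 → ‖β‖ = 1) ∧
      ¬ (∀ β : ℂ, Polynomial.aeval β (minpoly ℚ α) = 0 → ‖β‖ < 1)) ∨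
    ((∀ β : ℂ, Polynomial.aeval β (minpoly ℚ α) = 0 → ‖β‖ = 1) ∧
      ¬ (∃ β : ℂ, Polynomial.aeval β (minpoly ℚ α) = 0 ∧ 1 < ‖β‖) ∧
      ¬ (∀ β : ℂ, Polynomial.aeval β (minpoly ℚ α) = 0 → ‖β‖ < 1)) ∨
    ((∀ β : ℂ, Polynomial.aeval β (minpoly ℚ α) = 0 → ‖β‖ < 1) ∧
      ¬ (∃ β : ℂ, Polynomial.aeval β (minpoly ℚ α) = 0 ∧ 1 < ‖β‖) ∧
      ¬ (∀ β : ℂ, Polynomial.aeval β (minpoly ℚ α) = 0 → ‖β‖ = 1)) := by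
  have hroot : Polynomial.aeval α (minpoly ℚ α) = 0 := minpoly.aeval ℚ α
  by_cases h1 : ∃ β : ℂ, Polynomial.aeval β (minpoly ℚ α) = 0 ∧ 1 < ‖β‖
  · left
    obtain ⟨β, hβ, hβ1⟩ := h1
    refine ⟨⟨β, hβ, hβ1⟩, ?_, ?_⟩
    · intro hall; have := hall β hβ; linarith
    · intro hall; have := hall β hβ; linarith
  · push_neg at h1
    have hle : ∀ β : ℂ, Polynomial.aeval β (minpoly ℚ α) = 0 → ‖β‖ ≤ 1 :=
      fun β hβ => h1 β hβ
    by_cases h2 : ∀ β : ℂ, Polynomial.aeval β (minpoly ℚ α) = 0 → ‖β‖ = 1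
    · right; left
      refine ⟨h2, ?_, ?_⟩
      · rintro ⟨β, hβ, hβ1⟩; have := h2 β hβ; linarith
      · intro hall; have := hall α hroot; have := h2 α hroot; linarith
    · right; right
      have hlt : ∀ β : ℂ, Polynomial.aeval β (minpoly ℚ α) = 0 → ‖β‖ < 1 := by
        intro β hβ
        rcases lt_or_eq_of_le (hle β hβ) with h | h
        · exact h
        · exact absurd (fun δ hδ => key α hα hle hβ h hδ) h2
      refine ⟨hlt, ?_, h2⟩
      rintro ⟨β, hβ, hβ1⟩; have := hlt β hβ; linarith
end

section
/- Let R(x) = Σ_{i=0}^{r} u_i x^i ∈ ℤ[x] be a nonzero polynomial and let (x_k)_{k≥1} be a sequence of real numbers with Σ_{i=0}^{r} u_i x_{k+i} = 0 for all k ≥ 1. Suppose x_k = y_k + z_k with z_k ∈ ℤ for all k, (y_k) bounded, and (z_k) not a linear recurrent sequence over ℤ. Then limsup_{k→∞} |y_k| ≥ 1/L(R), where L(R) = Σ_{i=0}^{r} |u_i| is the length of R. -/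
/-- A sequence of reals satisfying an integer linear recurrence. -/
def IsLinRec (z : ℕ → ℝ) : Prop :=
  ∃ (d : ℕ) (a : ℕ → ℤ), a d ≠ 0 ∧ ∀ k : ℕ, 1 ≤ k →
    ∑ i ∈ Finset.range (d + 1), (a i : ℝ) * z (k + i) = 0

/-- If `x_k = y_k + z_k` satisfies the recurrence of `R`, with `y` bounded, `z` integral
and not linear recurrent, then `limsup |y_k| ≥ 1/L(R)`. -/
theorem stmt8 (r : ℕ) (u : ℕ → ℤ) (hu : ∃ i, i ≤ r ∧ u i ≠ 0)
    (x y : ℕ → ℝ) (z : ℕ → ℤ)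
    (hrec : ∀ k : ℕ, 1 ≤ k → ∑ i ∈ Finset.range (r + 1), (u i : ℝ) * x (k + i) = 0)
    (hxyz : ∀ k : ℕ, 1 ≤ k → x k = y k + z k)
    (hy : ∃ C : ℝ, ∀ k, |y k| ≤ C)
    (hz : ¬ IsLinRec (fun k => (z k : ℝ))) :
    1 / (∑ i ∈ Finset.range (r + 1), |(u i : ℝ)|) ≤
      Filter.limsup (fun k => |y k|) Filter.atTop := by
  by_contra hlt
  push_neg at hlt
  set L := ∑ i ∈ Finset.range (r + 1), |(u i : ℝ)| with hLdef
  -- the maximal nonzero coefficient index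
  classical
  set r0 := Nat.findGreatest (fun i => u i ≠ 0) r with hr0def
  obtain ⟨i0, hi0r, hi0⟩ := hu
  have hr0ne : u r0 ≠ 0 := Nat.findGreatest_spec (P := fun i => u i ≠ 0) hi0r hi0
  have hr0le : r0 ≤ r := Nat.findGreatest_le r
  have hr0max : ∀ j, r0 < j → j ≤ r → u j = 0 := by
    intro j hj hjr
    by_contra h
    exact Nat.findGreatest_is_greatest (P := fun i => u i ≠ 0) hj hjr h
  have hLpos : 0 < L := by
    apply Finset.sum_pos' (fun j _ => abs_nonneg _)
    refine ⟨r0, Finset.mem_range.mpr (Nat.lt_succ_of_le hr0le), ?_⟩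
    simpa using hr0ne
  obtain ⟨C, hC⟩ := hy
  have hbdd : Filter.IsBoundedUnder (· ≤ ·) Filter.atTop (fun k => |y k|) :=
    Filter.isBoundedUnder_of ⟨C, fun k => hC k⟩
  have hev : ∀ᶠ k in Filter.atTop, |y k| < 1 / L :=
    Filter.eventually_lt_of_limsup_lt hlt hbdd
  obtain ⟨K, hK⟩ := Filter.eventually_atTop.mp hev
  set m := max K 1 - 1 with hmdef
  have hm1 : m + 1 = max K 1 := Nat.succ_pred_eq_of_pos (lt_of_lt_of_le one_pos (le_max_right K 1))
  have hKm : K ≤ m + 1 := hm1 ▸ le_max_left K 1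
  -- key: recurrence for z for k ≥ m + 1
  have key : ∀ k : ℕ, m + 1 ≤ k → ∑ i ∈ Finset.range (r + 1), (u i : ℝ) * (z (k + i) : ℝ) = 0 := by
    intro k hk
    have hk1 : 1 ≤ k := le_trans (Nat.le_add_left 1 m) hk
    have hsplit : ∑ i ∈ Finset.range (r + 1), (u i : ℝ) * (y (k + i) + (z (k + i) : ℝ)) = 0 := by
      rw [← hrec k hk1]
      apply Finset.sum_congr rfl
      intro i _
      rw [hxyz (k + i) (le_trans hk1 (Nat.le_add_right k i))]
    have hS : ∑ i ∈ Finset.range (r + 1), (u i : ℝ) * (z (k + i) : ℝ)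
        = - ∑ i ∈ Finset.range (r + 1), (u i : ℝ) * y (k + i) := by
      have := hsplit
      simp only [mul_add, Finset.sum_add_distrib] at this
      linarith
    have habs : |∑ i ∈ Finset.range (r + 1), (u i : ℝ) * y (k + i)| < 1 := by
      calc |∑ i ∈ Finset.range (r + 1), (u i : ℝ) * y (k + i)|
          ≤ ∑ i ∈ Finset.range (r + 1), |(u i : ℝ) * y (k + i)| :=
            Finset.abs_sum_le_sum_abs _ _
        _ < ∑ i ∈ Finset.range (r + 1), |(u i : ℝ)| * (1 / L) := by
            apply Finset.sum_lt_sum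
            · intro i hi
              rw [abs_mul]
              apply mul_le_mul_of_nonneg_left _ (abs_nonneg _)
              exact le_of_lt (hK (k + i) (le_trans hKm (le_trans hk (Nat.le_add_right k i))))
            · refine ⟨r0, Finset.mem_range.mpr (Nat.lt_succ_of_le hr0le), ?_⟩
              rw [abs_mul]
              apply mul_lt_mul_of_pos_left _ (by simpa using hr0ne)
              exact hK (k + r0) (le_trans hKm (le_trans hk (Nat.le_add_right k r0)))
        _ = L * (1 / L) := by rw [← Finset.sum_mul]
        _ = 1 := by field_simp
    -- the z-sum is an integer with |·| < 1
    have hcast : ∑ i ∈ Finset.range (r + 1), (u i : ℝ) * (z (k + i) : ℝ)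
        = ((∑ i ∈ Finset.range (r + 1), u i * z (k + i) : ℤ) : ℝ) := by
      push_cast; ring
    rw [hcast]
    have hlt1 : |((∑ i ∈ Finset.range (r + 1), u i * z (k + i) : ℤ) : ℝ)| < 1 := by
      rw [← hcast, hS, abs_neg]; exact habs
    rw [← Int.cast_abs] at hlt1
    have h2 : |∑ i ∈ Finset.range (r + 1), u i * z (k + i)| < 1 := by exact_mod_cast hlt1
    have := Int.abs_lt_one_iff.mp h2
    exact_mod_cast congrArg (Int.cast : ℤ → ℝ) this
  -- build the linear recurrence for z
  apply hz
  refine ⟨r0 + m, fun i => if m ≤ i then u (i - m) else 0, ?_, ?_⟩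
  · simp [Nat.le_add_left m r0, Nat.add_sub_cancel, hr0ne]
  · intro k hk
    have hrw : ∑ i ∈ Finset.range (r0 + m + 1), ((if m ≤ i then u (i - m) else 0 : ℤ) : ℝ) * (z (k + i) : ℝ)
        = ∑ j ∈ Finset.range (r0 + 1), (u j : ℝ) * (z (k + m + j) : ℝ) := by
      have h1 : r0 + m + 1 = m + (r0 + 1) := by ring
      rw [h1, Finset.sum_range_add]
      have h2 : ∀ i ∈ Finset.range m, ((if m ≤ i then u (i - m) else 0 : ℤ) : ℝ) * (z (k + i) : ℝ) = 0 := by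
        intro i hi
        rw [Finset.mem_range] at hi
        rw [if_neg (Nat.not_le.mpr hi)]
        simp
      rw [Finset.sum_congr rfl h2, Finset.sum_const_zero, zero_add]
      apply Finset.sum_congr rfl
      intro j _
      rw [if_pos (Nat.le_add_right m j), Nat.add_sub_cancel_left]
      ring_nf
    rw [hrw]
    have hext : ∑ j ∈ Finset.range (r0 + 1), (u j : ℝ) * (z (k + m + j) : ℝ)
        = ∑ j ∈ Finset.range (r + 1), (u j : ℝ) * (z (k + m + j) : ℝ) := by
      apply Finset.sum_subset
      · exact Finset.range_subset_range.mpr (Nat.succ_le_succ hr0le)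
      · intro j hj hj'
        rw [Finset.mem_range] at hj
        rw [Finset.mem_range] at hj'
        rw [hr0max j (Nat.lt_of_succ_le (Nat.not_lt.mp hj')) (Nat.lt_succ_iff.mp hj)]
        simp
    rw [hext]
    exact key (k + m) (by omega)
end

section
/- Let P(x) = Σ_{s=0}^{d} a_s x^s ∈ ℤ[x] be nonzero with P(1) ≠ 0, and let F(x) = Σ_{i=0}^{f} θ_i x^i ∈ ℝ[x]. Let (x_k)_{k≥1} be reals satisfying Σ_{s=0}^{d} a_s x_{k+s} = 0 for all k ≥ 1. If the set of limit values of the sequence (x_k + F(k) mod 1)_{k≥1} in ℝ/ℤ is finite, then F(x) − F(0) ∈ ℚ[x]. -/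
open Filter Topology

/-! ### Rationality predicate -/

private def IsRat (x : ℝ) : Prop := ∃ q : ℚ, x = q

private lemma isRat_intCast (z : ℤ) : IsRat (z : ℝ) := ⟨z, by push_cast; ring⟩
private lemma isRat_natCast (n : ℕ) : IsRat (n : ℝ) := ⟨n, by push_cast; ring⟩
private lemma IsRat.add {x y : ℝ} (hx : IsRat x) (hy : IsRat y) : IsRat (x + y) := by
  obtain ⟨q, rfl⟩ := hx; obtain ⟨r, rfl⟩ := hy; exact ⟨q + r, by push_cast; ring⟩
private lemma IsRat.mul {x y : ℝ} (hx : IsRat x) (hy : IsRat y) : IsRat (x * y) := by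
  obtain ⟨q, rfl⟩ := hx; obtain ⟨r, rfl⟩ := hy; exact ⟨q * r, by push_cast; ring⟩
private lemma IsRat.sub {x y : ℝ} (hx : IsRat x) (hy : IsRat y) : IsRat (x - y) := by
  obtain ⟨q, rfl⟩ := hx; obtain ⟨r, rfl⟩ := hy; exact ⟨q - r, by push_cast; ring⟩
private lemma IsRat.div {x y : ℝ} (hx : IsRat x) (hy : IsRat y) : IsRat (x / y) := by
  obtain ⟨q, rfl⟩ := hx; obtain ⟨r, rfl⟩ := hy; exact ⟨q / r, by push_cast; ring⟩
private lemma isRat_sum {ι : Type*} (s : Finset ι) (f : ι → ℝ)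
    (h : ∀ i ∈ s, IsRat (f i)) : IsRat (∑ i ∈ s, f i) := by
  classical
  induction s using Finset.induction_on with
  | empty => exact ⟨0, by simp⟩
  | insert _ _ hni ih =>
    rename_i a s
    rw [Finset.sum_insert hni]
    exact (h a (Finset.mem_insert_self a s)).add
      (ih fun i hi => h i (Finset.mem_insert_of_mem hi))

/-! ### Cluster point infrastructure -/

private theorem lift_mcp {X Y : Type*} [TopologicalSpace X] [TopologicalSpace Y] [CompactSpace X]
    [T2Space Y] {φ : X → Y} (hφ : Continuous φ) (u : ℕ → X) (p : Y)
    (h : MapClusterPt p atTop (φ ∘ u)) : ∃ q, MapClusterPt q atTop u ∧ φ q = p := by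
  have h1 : NeBot (map φ (map u atTop) ⊓ 𝓝 p) := by
    rw [Filter.map_map, inf_comm]; exact h
  rw [← Filter.push_pull] at h1
  have h2 : NeBot (map u atTop ⊓ comap φ (𝓝 p)) := by
    rcases eq_or_neBot (map u atTop ⊓ comap φ (𝓝 p)) with he | hne
    · rw [he, Filter.map_bot] at h1; exact absurd rfl h1.ne
    · exact hne
  obtain ⟨q, hq⟩ := exists_clusterPt_of_compactSpace (map u atTop ⊓ comap φ (𝓝 p))
  refine ⟨q, hq.mono inf_le_left, ?_⟩
  have h3 : NeBot (𝓝 q ⊓ comap φ (𝓝 p)) := hq.mono inf_le_right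
  have h4 : Tendsto φ (𝓝 q ⊓ comap φ (𝓝 p)) (𝓝 (φ q)) :=
    hφ.continuousAt.mono_left inf_le_left
  have h5 : Tendsto φ (𝓝 q ⊓ comap φ (𝓝 p)) (𝓝 p) :=
    tendsto_comap.mono_left inf_le_right
  exact tendsto_nhds_unique h4 h5

private theorem clusterFinite_comp {X Y : Type*} [TopologicalSpace X] [TopologicalSpace Y]
    [CompactSpace X] [T2Space Y] {φ : X → Y} (hφ : Continuous φ) (u : ℕ → X)
    (h : {q : X | MapClusterPt q atTop u}.Finite) :
    {p : Y | MapClusterPt p atTop (fun k => φ (u k))}.Finite := by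
  refine (h.image φ).subset ?_
  intro p hp
  obtain ⟨q, hq, rfl⟩ := lift_mcp hφ u p hp
  exact ⟨q, hq, rfl⟩

private theorem shift_mcp {X : Type*} [TopologicalSpace X] (u : ℕ → X) (s : ℕ) (p : X)
    (h : MapClusterPt p atTop (fun k => u (k + s))) : MapClusterPt p atTop u := by
  have : (fun k => u (k + s)) = u ∘ (fun k => k + s) := rfl
  rw [this, mapClusterPt_comp, Filter.map_add_atTop_eq_nat] at h
  exact h

private theorem shift_mcp' {X : Type*} [TopologicalSpace X] (u : ℕ → X) (s : ℕ) (p : X)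
    (h : MapClusterPt p atTop u) : MapClusterPt p atTop (fun k => u (k + s)) := by
  have he : (fun k => u (k + s)) = u ∘ (fun k => k + s) := rfl
  rw [he, mapClusterPt_comp, Filter.map_add_atTop_eq_nat]
  exact h

private theorem clusterFinite_shift {X : Type*} [TopologicalSpace X] (u : ℕ → X) (s : ℕ)
    (h : {q : X | MapClusterPt q atTop (fun k => u (k + s))}.Finite) :
    {q : X | MapClusterPt q atTop u}.Finite :=
  h.subset fun p hp => shift_mcp' u s p hp

private theorem clusterFinite_subseq {X : Type*} [TopologicalSpace X] (u : ℕ → X) {g : ℕ → ℕ}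
    (hg : Tendsto g atTop atTop)
    (h : {q : X | MapClusterPt q atTop u}.Finite) :
    {q : X | MapClusterPt q atTop (fun k => u (g k))}.Finite :=
  h.subset fun p hp => MapClusterPt.of_comp hg hp

private theorem clusterFinite_pi {X : Type*} [TopologicalSpace X] {m : ℕ}
    (u : ℕ → (Fin m → X)) (h : ∀ s : Fin m, {p : X | MapClusterPt p atTop (fun k => u k s)}.Finite) :
    {q : Fin m → X | MapClusterPt q atTop u}.Finite := by
  refine (Set.Finite.pi fun s => h s).subset ?_
  intro q hq
  rw [Set.mem_pi]
  intro s _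
  exact hq.continuousAt_comp (f := fun v : Fin m → X => v s) ((continuous_apply s).continuousAt)

section Helpers
open Finset


private lemma range_extend {M : Type*} [AddCommMonoid M] {j n : ℕ} (hjn : j ≤ n) (g : ℕ → M) :
    ∑ i ∈ range j, g i = ∑ i ∈ range n, if i < j then g i else 0 := by
  rw [← Finset.sum_filter]
  congr 1
  ext i
  simp only [mem_filter, mem_range]
  omega

private lemma pow_succ_sub (j : ℕ) (x : ℝ) :
    (x + 1) ^ j - x ^ j = ∑ i ∈ range j, (j.choose i : ℝ) * x ^ i := by
  rw [add_pow, Finset.sum_range_succ]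
  simp [Nat.choose_self, mul_comm]

private lemma diff_expand (n : ℕ) (c : ℕ → ℝ) (x : ℝ) :
    (∑ j ∈ range (n+1), c j * (x+1)^j) - ∑ j ∈ range (n+1), c j * x^j
    = ∑ i ∈ range n, (∑ j ∈ range (n+1), if i < j then c j * (j.choose i : ℝ) else 0) * x^i := by
  rw [← Finset.sum_sub_distrib]
  have : ∀ j ∈ range (n+1), c j * (x+1)^j - c j * x^j
      = ∑ i ∈ range n, (if i < j then c j * (j.choose i : ℝ) else 0) * x^i := by
    intro j hj
    rw [← mul_sub, pow_succ_sub, mul_sum]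
    rw [range_extend (by simpa using Nat.lt_succ_iff.mp (mem_range.mp hj))
      (fun i => c j * ((j.choose i : ℝ) * x ^ i))]
    congr 1
    ext i
    split
    · ring
    · simp
  rw [Finset.sum_congr rfl this, Finset.sum_comm]
  exact Finset.sum_congr rfl fun i _ => (Finset.sum_mul ..).symm


private lemma cprime_top (n : ℕ) (hn : 1 ≤ n) (c : ℕ → ℝ) :
    (∑ j ∈ range (n+1), if n-1 < j then c j * (j.choose (n-1) : ℝ) else 0) = n * c n := by
  rw [Finset.sum_eq_single n]
  · rw [if_pos (by omega)]
    have : n.choose (n-1) = n := by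
      rw [Nat.choose_symm hn, Nat.choose_one_right]
    rw [this]; ring
  · intro j hj hjn
    rw [if_neg (by simp at hj; omega)]
  · intro h; simp at h

private lemma coe_eq_of_int_diff (x y : ℝ) (z : ℤ) (h : x = y + z) :
    (x : AddCircle (1:ℝ)) = (y : AddCircle (1:ℝ)) := by
  rw [h, AddCircle.coe_add]
  have : ((z : ℝ) : AddCircle (1:ℝ)) = 0 := by
    rw [AddCircle.coe_eq_zero_iff]; exact ⟨z, by simp⟩
  rw [this, add_zero]

private lemma rat_mul_den (r : ℚ) : (r : ℝ) * (r.den : ℝ) = (r.num : ℝ) := by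
  have h : (r * (r.den : ℚ) : ℚ) = (r.num : ℚ) := by
    exact Rat.mul_den_eq_num r
  calc (r : ℝ) * (r.den : ℝ) = ((r * (r.den:ℚ) : ℚ) : ℝ) := by push_cast; ring
  _ = (r.num : ℝ) := by rw [h]; push_cast; ring

private theorem rot_lemma (α β : ℝ)
    (hfin : {p : AddCircle (1:ℝ) | MapClusterPt p atTop
      (fun k : ℕ => ((α * k + β : ℝ) : AddCircle (1:ℝ)))}.Finite) :
    ∃ q : ℚ, α = q := by
  by_contra hirr
  set u : ℕ → AddCircle (1:ℝ) := fun k => ((α * k + β : ℝ) : AddCircle (1:ℝ)) with hu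
  set T := {p : AddCircle (1:ℝ) | MapClusterPt p atTop u} with hT
  -- T nonempty
  obtain ⟨p₀, -, hp₀⟩ := isCompact_univ.exists_mapClusterPt
    (f := (atTop : Filter ℕ)) (u := u) (by simp)
  -- closure under + A
  set A : AddCircle (1:ℝ) := ((α : ℝ) : AddCircle (1:ℝ)) with hA
  have hclose : ∀ p ∈ T, p + A ∈ T := by
    intro p hp
    have h1 : MapClusterPt (p + A) atTop (fun k => u k + A) :=
      hp.continuousAt_comp (f := fun z => z + A) (continuous_add_right A).continuousAt
    have h2 : (fun k => u k + A) = fun k => u (k + 1) := by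
      funext k
      show ((α * k + β : ℝ) : AddCircle (1:ℝ)) + ((α : ℝ) : AddCircle (1:ℝ)) = _
      rw [← AddCircle.coe_add]
      congr 1
      push_cast; ring
    rw [h2] at h1
    exact shift_mcp u 1 _ h1
  -- orbit map injective
  have horbit : ∀ n : ℕ, p₀ + n • A ∈ T := by
    intro n; induction n with
    | zero => rw [zero_nsmul, add_zero]; exact hp₀
    | succ n ih =>
      have := hclose _ ih
      rwa [add_assoc, ← succ_nsmul] at this
  have hkey : ∀ n m : ℕ, m < n → p₀ + n • A = p₀ + m • A → False := by
    intro n m hlt hnm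
    have h0 : (n - m) • A = 0 := by
      have := add_left_cancel hnm
      have h' : (n - m) • A + m • A = m • A := by
        rw [← add_nsmul]
        rw [Nat.sub_add_cancel hlt.le, this]
      simpa using h'
    have h1 : (((n - m : ℕ) * α : ℝ) : AddCircle (1:ℝ)) = 0 := by
      rw [← h0, hA, ← AddCircle.coe_nsmul]
      norm_num
    rw [AddCircle.coe_eq_zero_iff] at h1
    obtain ⟨z, hz⟩ := h1
    apply hirr
    refine ⟨(z : ℚ) / ((n - m : ℕ) : ℚ), ?_⟩
    have hnm0 : ((n - m : ℕ) : ℝ) ≠ 0 := by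
      have : 0 < n - m := by omega
      positivity
    field_simp
    push_cast
    rw [eq_div_iff hnm0, mul_comm]
    simpa using hz.symm
  have hinj : Function.Injective (fun n : ℕ => p₀ + n • A) := by
    intro n m hnm
    rcases lt_trichotomy m n with h | h | h
    · exact absurd (hkey n m h hnm) not_false
    · exact h.symm
    · exact absurd (hkey m n h hnm.symm) not_false
  exact Set.infinite_of_injective_forall_mem hinj horbit hfin

end Helpers
section Poly
open Finset

set_option maxHeartbeats 1000000 in
private theorem polyRat : ∀ (n : ℕ) (c : ℕ → ℝ),
    ({p : AddCircle (1:ℝ) | MapClusterPt p atTop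
      (fun k : ℕ => ((∑ i ∈ range (n+1), c i * (k:ℝ)^i : ℝ) : AddCircle (1:ℝ)))}).Finite →
    ∀ i, 1 ≤ i → i ≤ n → IsRat (c i) := by
  intro n
  induction n using Nat.strong_induction_on with
  | _ n IH =>
  intro c hfin i hi1 hin
  cases n with
  | zero => omega
  | succ n =>
  cases n with
  | zero =>
    -- linear case
    have hfun : (fun k : ℕ => ((∑ i ∈ range 2, c i * (k:ℝ)^i : ℝ) : AddCircle (1:ℝ)))
        = (fun k : ℕ => ((c 1 * (k:ℝ) + c 0 : ℝ) : AddCircle (1:ℝ))) := by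
      funext k
      congr 1
      rw [sum_range_succ, sum_range_succ, sum_range_zero]
      ring
    rw [hfun] at hfin
    obtain ⟨q, hq⟩ := rot_lemma (c 1) (c 0) hfin
    have : i = 1 := by omega
    rw [this]
    exact ⟨q, hq⟩
  | succ m =>
    set y : ℕ → AddCircle (1:ℝ) :=
      fun k : ℕ => ((∑ i ∈ range (m+3), c i * (k:ℝ)^i : ℝ) : AddCircle (1:ℝ)) with hy
    set c' : ℕ → ℝ := fun i => ∑ j ∈ range (m+3), if i < j then c j * (j.choose i : ℝ) else 0
      with hc'
    have hD : ∀ k : ℕ, ((∑ i ∈ range (m+2), c' i * (k:ℝ)^i : ℝ) : AddCircle (1:ℝ))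
        = y (k+1) - y (k+0) := by
      intro k
      have h1 : (∑ i ∈ range (m+2), c' i * (k:ℝ)^i)
          = (∑ j ∈ range (m+3), c j * ((k:ℝ)+1)^j) - ∑ j ∈ range (m+3), c j * (k:ℝ)^j :=
        (diff_expand (m+2) c (k:ℝ)).symm
      have hA : (∑ j ∈ range (m+3), c j * ((k:ℝ)+1)^j)
          = ∑ j ∈ range (m+3), c j * (((k+1:ℕ)):ℝ)^j :=
        Finset.sum_congr rfl fun j _ => by push_cast; ring
      have hB : (∑ j ∈ range (m+3), c j * (k:ℝ)^j)
          = ∑ j ∈ range (m+3), c j * (((k+0:ℕ)):ℝ)^j :=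
        Finset.sum_congr rfl fun j _ => by push_cast; ring
      rw [h1, hA, hB, AddCircle.coe_sub, hy]
    have hfinD : {p : AddCircle (1:ℝ) | MapClusterPt p atTop
        (fun k : ℕ => ((∑ i ∈ range (m+2), c' i * (k:ℝ)^i : ℝ) : AddCircle (1:ℝ)))}.Finite := by
      have hu : ∀ s : Fin 2, {p : AddCircle (1:ℝ) |
          MapClusterPt p atTop (fun k => y (k + (s:ℕ)))}.Finite :=
        fun s => hfin.subset (fun p hp => shift_mcp y s p hp)
      set u : ℕ → (Fin 2 → AddCircle (1:ℝ)) := fun k s => y (k + (s:ℕ)) with hudef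
      have hpi : {q : Fin 2 → AddCircle (1:ℝ) | MapClusterPt q atTop u}.Finite :=
        clusterFinite_pi u hu
      set φ : (Fin 2 → AddCircle (1:ℝ)) → AddCircle (1:ℝ) := fun v => v 1 - v 0 with hφdef
      have hφ : Continuous φ := (continuous_apply (1 : Fin 2)).sub (continuous_apply (0 : Fin 2))
      have hcomp : {p : AddCircle (1:ℝ) | MapClusterPt p atTop (fun k => φ (u k))}.Finite :=
        clusterFinite_comp hφ u hpi
      have heqf : (fun k : ℕ => ((∑ i ∈ range (m+2), c' i * (k:ℝ)^i : ℝ) : AddCircle (1:ℝ)))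
          = (fun k : ℕ => φ (u k)) := by
        funext k
        rw [hφdef, hudef]
        simpa using hD k
      rw [heqf]
      exact hcomp
    have hc'rat : ∀ j, 1 ≤ j → j ≤ m+1 → IsRat (c' j) := IH (m+1) (by omega) c' hfinD
    have htop : IsRat (c (m+2)) := by
      have h := hc'rat (m+1) (by omega) (le_refl _)
      have he : c' (m+1) = ((m+2 : ℕ) : ℝ) * c (m+2) := by
        have h2 := cprime_top (m+2) (by omega) c
        have h3 : (m+2) - 1 = m+1 := rfl
        rw [h3] at h2
        rw [hc']
        convert h2 using 1
      rw [he] at h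
      have hne : ((m+2 : ℕ) : ℝ) ≠ 0 := by positivity
      have hdiv : c (m+2) = ((m+2:ℕ):ℝ) * c (m+2) / ((m+2:ℕ):ℝ) := by field_simp
      rw [hdiv]
      exact h.div (isRat_natCast _)
    obtain ⟨r, hr⟩ := htop
    set q : ℕ := r.den with hqdef
    have hqpos : 0 < q := r.pos
    have hg : Tendsto (fun k : ℕ => q * k) atTop atTop :=
      tendsto_atTop_mono (fun k => Nat.le_mul_of_pos_left k hqpos) tendsto_id
    have hsub := clusterFinite_subseq y hg hfin
    have hkey2 : (r:ℝ) * (q:ℝ)^(m+2) = (r.num:ℝ) * (q:ℝ)^(m+1) := by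
      have h := rat_mul_den r
      calc (r:ℝ)*(q:ℝ)^(m+2) = ((r:ℝ)*((r.den:ℕ):ℝ))*(q:ℝ)^(m+1) := by rw [hqdef]; ring
      _ = (r.num:ℝ)*(q:ℝ)^(m+1) := by rw [h]
    have heq2 : (fun k : ℕ => y (q*k))
        = fun k : ℕ => ((∑ i ∈ range (m+2), (c i * (q:ℝ)^i) * (k:ℝ)^i : ℝ) : AddCircle (1:ℝ)) := by
      funext k
      rw [hy]
      apply coe_eq_of_int_diff _ _ (r.num * (q:ℤ)^(m+1) * (k:ℤ)^(m+2))
      rw [Finset.sum_range_succ]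
      have hterm : ∀ i ∈ range (m+2), c i * ((q*k : ℕ):ℝ)^i = (c i * (q:ℝ)^i) * (k:ℝ)^i := by
        intro i _
        push_cast
        ring
      rw [Finset.sum_congr rfl hterm, hr]
      push_cast
      linear_combination ((k:ℝ))^(m+2) * hkey2
    rw [heq2] at hsub
    have hlow := IH (m+1) (by omega) (fun i => c i * (q:ℝ)^i) hsub
    rcases Nat.lt_or_ge i (m+2) with hlt | hge
    · have h := hlow i hi1 (by omega)
      have hqne : ((q:ℝ))^i ≠ 0 := by positivity
      have hdiv : c i = (c i * (q:ℝ)^i) / (q:ℝ)^i := by field_simp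
      rw [hdiv]
      exact h.div ⟨(q:ℚ)^i, by push_cast; ring⟩
    · have : i = m+2 := by omega
      rw [this]
      exact ⟨r, hr⟩
end Poly
section Main
open Finset

private lemma coe_sum_zsmul (m : ℕ) (g : ℕ → ℤ) (v : ℕ → ℝ) :
    ((∑ s ∈ range m, (g s : ℝ) * v s : ℝ) : AddCircle (1:ℝ))
      = ∑ s ∈ range m, g s • ((v s : ℝ) : AddCircle (1:ℝ)) := by
  induction m with
  | zero => simp
  | succ m ih =>
    rw [Finset.sum_range_succ, Finset.sum_range_succ, AddCircle.coe_add, ih,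
      ← AddCircle.coe_zsmul, zsmul_eq_mul]

set_option maxHeartbeats 1000000 in
/-- If `P(1) ≠ 0`, `(x_k)` satisfies the recurrence of `P`, and the set of limit values of
`(x_k + F(k) mod 1)` is finite, then `F(x) - F(0) ∈ ℚ[x]`. -/
theorem stmt10 (d f : ℕ) (a : ℕ → ℤ) (ha : ∃ s, s ≤ d ∧ a s ≠ 0)
    (h1 : ∑ s ∈ Finset.range (d + 1), a s ≠ 0)
    (θ : ℕ → ℝ) (x : ℕ → ℝ)
    (hrec : ∀ k : ℕ, 1 ≤ k → ∑ s ∈ Finset.range (d + 1), (a s : ℝ) * x (k + s) = 0)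
    (hfin : {p : AddCircle (1 : ℝ) | MapClusterPt p Filter.atTop
      (fun k : ℕ => ((x k + ∑ i ∈ Finset.range (f + 1), θ i * (k : ℝ) ^ i : ℝ) :
        AddCircle (1 : ℝ)))}.Finite) :
    ∀ i : ℕ, 1 ≤ i → i ≤ f → ∃ q : ℚ, θ i = q := by
  set F : ℕ → ℝ := fun k => ∑ i ∈ range (f + 1), θ i * (k : ℝ) ^ i with hF
  set y : ℕ → AddCircle (1:ℝ) := fun k => ((x k + F k : ℝ) : AddCircle (1:ℝ)) with hy
  set G : ℕ → ℝ := fun k => ∑ s ∈ range (d + 1), (a s : ℝ) * F (k + s) with hG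
  -- step 1 : the recurrence kills x
  set w : ℕ → (Fin (d+1) → AddCircle (1:ℝ)) := fun k s => y (k + (1 + (s:ℕ))) with hw
  set φ : (Fin (d+1) → AddCircle (1:ℝ)) → AddCircle (1:ℝ) :=
    fun v => ∑ s : Fin (d+1), a (s:ℕ) • v s with hφ
  have hGy : ∀ k : ℕ, ((G (k+1) : ℝ) : AddCircle (1:ℝ)) = φ (w k) := by
    intro k
    have hreal : G (k+1) = ∑ s ∈ range (d + 1), (a s : ℝ) * (x (k+1+s) + F (k+1+s)) := by
      have h0 := hrec (k+1) (by omega)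
      have : ∑ s ∈ range (d + 1), (a s : ℝ) * (x (k+1+s) + F (k+1+s))
          = (∑ s ∈ range (d + 1), (a s : ℝ) * x (k+1+s))
            + ∑ s ∈ range (d + 1), (a s : ℝ) * F (k+1+s) := by
        rw [← Finset.sum_add_distrib]
        exact Finset.sum_congr rfl fun s _ => by ring
      rw [this, h0, zero_add, hG]
    rw [hreal, coe_sum_zsmul (d+1) a (fun s => x (k+1+s) + F (k+1+s))]
    rw [hφ, hw, Finset.sum_range (fun s => a s • ((x (k+1+s) + F (k+1+s) : ℝ) : AddCircle (1:ℝ)))]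
    apply Finset.sum_congr rfl
    intro s _
    have hn : k+1+(s:ℕ) = k + (1+(s:ℕ)) := by omega
    rw [hn, hy]
  -- step 2 : finitely many cluster points for G
  have hfinG : {p : AddCircle (1:ℝ) | MapClusterPt p Filter.atTop
      (fun k : ℕ => ((G k : ℝ) : AddCircle (1:ℝ)))}.Finite := by
    have hu : ∀ s : Fin (d+1), {p : AddCircle (1:ℝ) |
        MapClusterPt p Filter.atTop (fun k => y (k + (1 + (s:ℕ))))}.Finite :=
      fun s => hfin.subset fun p hp => shift_mcp y (1 + (s:ℕ)) p hp
    have hpi : {q : Fin (d+1) → AddCircle (1:ℝ) | MapClusterPt q Filter.atTop w}.Finite :=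
      clusterFinite_pi w hu
    have hφc : Continuous φ := by
      rw [hφ]
      exact continuous_finset_sum _ fun s _ =>
        (continuous_zsmul (a (s:ℕ))).comp (continuous_apply s)
    have hcomp : {p : AddCircle (1:ℝ) |
        MapClusterPt p Filter.atTop (fun k => φ (w k))}.Finite :=
      clusterFinite_comp hφc w hpi
    have heq : (fun k : ℕ => ((G (k+1) : ℝ) : AddCircle (1:ℝ))) = fun k => φ (w k) :=
      funext hGy
    apply clusterFinite_shift (fun k : ℕ => ((G k : ℝ) : AddCircle (1:ℝ))) 1
    rw [heq]
    exact hcomp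
  -- step 3 : G is a polynomial with coefficients b
  set M : ℕ → ℝ := fun t => ∑ s ∈ range (d+1), (a s : ℝ) * (s:ℝ)^t with hM
  set b : ℕ → ℝ := fun i => ∑ j ∈ range (f+1),
    if i ≤ j then θ j * (j.choose i : ℝ) * M (j - i) else 0 with hb
  have hGb : ∀ k : ℕ, G k = ∑ i ∈ range (f+1), b i * (k:ℝ)^i := by
    intro k
    have hterm : ∀ s ∈ range (d+1), (a s : ℝ) * F (k + s)
        = ∑ j ∈ range (f+1), ∑ i ∈ range (f+1),
            (if i ≤ j then (a s : ℝ) * θ j * (j.choose i : ℝ) * (k:ℝ)^i * (s:ℝ)^(j-i) else 0) := by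
      intro s _
      rw [hF]
      simp only []
      rw [Finset.mul_sum]
      apply Finset.sum_congr rfl
      intro j hj
      have hcast : ((k + s : ℕ) : ℝ) = (k:ℝ) + (s:ℝ) := by push_cast; ring
      rw [hcast, add_pow]
      rw [range_extend (Nat.succ_le_succ (Nat.lt_succ_iff.mp (mem_range.mp hj)))
        (fun i => (k:ℝ)^i * (s:ℝ)^(j-i) * (j.choose i : ℝ))]
      rw [Finset.mul_sum, Finset.mul_sum]
      apply Finset.sum_congr rfl
      intro i _
      rcases Nat.lt_or_ge i (j+1) with h | h
      · rw [if_pos h, if_pos (by omega)]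
        ring
      · rw [if_neg (by omega), if_neg (by omega)]
        ring
    rw [hG]
    simp only []
    rw [Finset.sum_congr rfl hterm]
    rw [Finset.sum_comm]
    have swap2 : ∀ j ∈ range (f+1), (∑ s ∈ range (d+1), ∑ i ∈ range (f+1),
        (if i ≤ j then (a s : ℝ) * θ j * (j.choose i : ℝ) * (k:ℝ)^i * (s:ℝ)^(j-i) else 0))
        = ∑ i ∈ range (f+1), ∑ s ∈ range (d+1),
        (if i ≤ j then (a s : ℝ) * θ j * (j.choose i : ℝ) * (k:ℝ)^i * (s:ℝ)^(j-i) else 0) :=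
      fun j _ => Finset.sum_comm
    rw [Finset.sum_congr rfl swap2]
    rw [Finset.sum_comm]
    apply Finset.sum_congr rfl
    intro i _
    rw [hb]
    simp only []
    rw [Finset.sum_mul]
    apply Finset.sum_congr rfl
    intro j _
    rcases Nat.lt_or_ge j i with h | h
    · rw [if_neg (by omega)]
      rw [zero_mul]
      apply Finset.sum_eq_zero
      intro s _
      rw [if_neg (by omega)]
    · rw [if_pos (by omega)]
      rw [hM]
      simp only []
      rw [Finset.mul_sum, Finset.sum_mul]
      apply Finset.sum_congr rfl
      intro s _
      rw [if_pos (by omega)]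
      ring
  -- step 4 : rationality of the b i and recovery of the θ i
  have hfinb : {p : AddCircle (1:ℝ) | MapClusterPt p Filter.atTop
      (fun k : ℕ => ((∑ i ∈ range (f+1), b i * (k:ℝ)^i : ℝ) : AddCircle (1:ℝ)))}.Finite := by
    have heq : (fun k : ℕ => ((∑ i ∈ range (f+1), b i * (k:ℝ)^i : ℝ) : AddCircle (1:ℝ)))
        = fun k : ℕ => ((G k : ℝ) : AddCircle (1:ℝ)) := funext fun k => by rw [← hGb k]
    rw [heq]
    exact hfinG
  have hbrat : ∀ i, 1 ≤ i → i ≤ f → IsRat (b i) := polyRat f b hfinb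
  have hMrat : ∀ t, IsRat (M t) := fun t => isRat_sum _ _
    (fun s _ => (isRat_intCast (a s)).mul ⟨(s:ℚ)^t, by push_cast; ring⟩)
  have hM0 : M 0 ≠ 0 := by
    rw [hM]
    simp only [pow_zero, mul_one]
    intro hc
    apply h1
    have h2 : ((∑ s ∈ range (d+1), a s : ℤ) : ℝ) = 0 := by push_cast; exact hc
    exact_mod_cast h2
  have hsplit : ∀ i, i ≤ f → b i = θ i * M 0
      + ∑ j ∈ range (f+1), (if i < j then θ j * (j.choose i:ℝ) * M (j-i) else 0) := by
    intro i hif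
    rw [hb]
    simp only []
    have hsp : ∀ j ∈ range (f+1), (if i ≤ j then θ j * (j.choose i:ℝ) * M (j-i) else 0)
        = (if i = j then θ j * (j.choose i:ℝ) * M (j-i) else 0)
          + (if i < j then θ j * (j.choose i:ℝ) * M (j-i) else 0) := by
      intro j _
      rcases Nat.lt_trichotomy i j with h | h | h
      · rw [if_pos (by omega), if_neg (by omega), if_pos h]
        ring
      · rw [if_pos (by omega), if_pos h, if_neg (by omega)]
        ring
      · rw [if_neg (by omega), if_neg (by omega), if_neg (by omega)]
        ring
    rw [Finset.sum_congr rfl hsp, Finset.sum_add_distrib]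
    congr 1
    rw [Finset.sum_ite_eq (range (f+1)) i (fun j => θ j * (j.choose i:ℝ) * M (j-i))]
    rw [if_pos (mem_range.mpr (by omega)), Nat.choose_self, Nat.sub_self]
    push_cast
    ring
  have hstep : ∀ i, 1 ≤ i → i ≤ f → (∀ j, i < j → j ≤ f → IsRat (θ j)) → IsRat (θ i) := by
    intro i hi1 hif hhigh
    have hbi := hbrat i hi1 hif
    have hR : IsRat (∑ j ∈ range (f+1), (if i < j then θ j * (j.choose i:ℝ) * M (j-i) else 0)) := by
      apply isRat_sum
      intro j hj
      rcases Nat.lt_or_ge i j with h | h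
      · rw [if_pos h]
        exact ((hhigh j h (by simp at hj; omega)).mul (isRat_natCast _)).mul (hMrat _)
      · rw [if_neg (by omega)]
        exact ⟨0, by norm_num⟩
    have hval : θ i = (b i
        - ∑ j ∈ range (f+1), (if i < j then θ j * (j.choose i:ℝ) * M (j-i) else 0)) / M 0 := by
      rw [hsplit i hif]
      field_simp
      ring
    rw [hval]
    exact (hbi.sub hR).div (hMrat 0)
  have main : ∀ t (i : ℕ), 1 ≤ i → i ≤ f → f - i ≤ t → IsRat (θ i) := by
    intro t
    induction t with
    | zero =>
      intro i h1' h2' h3'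
      exact hstep i h1' h2' (fun j hj1 hj2 => absurd hj2 (by omega))
    | succ t ih =>
      intro i h1' h2' h3'
      exact hstep i h1' h2' (fun j hj1 hj2 => ih j (by omega) hj2 (by omega))
  intro i hi1 hif
  exact main (f - i) i hi1 hif le_rfl
end Main
end

section
/- Let ξ > 0 and let α = p/q be a rational number with integers p > |q| > 0 and p/q ∉ ℤ. Then the sequence (⌊ξ α^{k+1}⌋ − α ⌊ξ α^k⌋)_{k≥1} is not ultimately periodic. -/
/-- Dubickas–Novikas: for `ξ > 0` and `α = p/q > 1` rational but not an integer,
the sequence `(⌊ξ α^{k+1}⌋ - α ⌊ξ α^k⌋)` is not ultimately periodic. -/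
theorem stmt14 (p q : ℤ) (hq : 0 < |q|) (hpq : |q| < p) (hnint : ¬ q ∣ p)
    (hα : (1 : ℝ) < (p : ℝ) / (q : ℝ)) (ξ : ℝ) (hξ : 0 < ξ) :
    ¬ ∃ N m : ℕ, 1 ≤ m ∧ ∀ k : ℕ, N ≤ k →
      (⌊ξ * ((p : ℝ) / q) ^ (k + m + 1)⌋ : ℝ)
          - ((p : ℝ) / q) * ⌊ξ * ((p : ℝ) / q) ^ (k + m)⌋
        = (⌊ξ * ((p : ℝ) / q) ^ (k + 1)⌋ : ℝ)
          - ((p : ℝ) / q) * ⌊ξ * ((p : ℝ) / q) ^ k⌋ := by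
  rintro ⟨N, m, hm, hper⟩
  have hqz : q ≠ 0 := fun h => by simp [h] at hq
  have hqR : (q : ℝ) ≠ 0 := by exact_mod_cast hqz
  have hpz : p ≠ 0 := by
    intro h; rw [h] at hpq; exact absurd hpq (not_lt.2 (le_of_lt hq))
  set α : ℝ := (p : ℝ) / q with hαdef
  have hα1 : (1 : ℝ) < α := hα
  have hα0 : (0 : ℝ) < α := lt_trans one_pos hα1
  set x : ℕ → ℤ := fun k => ⌊ξ * α ^ k⌋ with hxdef
  set t : ℕ → ℤ := fun k => x (k + m) - x k with htdef
  have hqα : (q : ℝ) * α = p := by rw [hαdef]; field_simp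
  -- Step 1: q * t (k+1) = p * t k for k ≥ N
  have key : ∀ k, N ≤ k → q * t (k + 1) = p * t k := by
    intro k hk
    have h := hper k hk
    have hre : ((q * t (k + 1) : ℤ) : ℝ) = ((p * t k : ℤ) : ℝ) := by
      simp only [htdef, hxdef]
      rw [show k + 1 + m = k + m + 1 from by omega]
      push_cast
      linear_combination (q : ℝ) * h +
        ((⌊ξ * α ^ (k + m)⌋ : ℝ) - (⌊ξ * α ^ k⌋ : ℝ)) * hqα
    exact_mod_cast hre
  -- reduced fraction
  set G : ℤ := (Int.gcd p q : ℤ) with hGdef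
  have hGp : G ∣ p := Int.gcd_dvd_left p q
  have hGq : G ∣ q := Int.gcd_dvd_right p q
  have hGnat : 0 < Int.gcd p q :=
    Nat.pos_of_ne_zero fun h => hpz (Int.gcd_eq_zero_iff.mp h).1
  have hGpos : (0 : ℤ) < G := by rw [hGdef]; exact_mod_cast hGnat
  set p' : ℤ := p / G with hp'def
  set q' : ℤ := q / G with hq'def
  have hpG : G * p' = p := Int.mul_ediv_cancel' hGp
  have hqG : G * q' = q := Int.mul_ediv_cancel' hGq
  have hcop : IsCoprime p' q' := by
    rw [Int.isCoprime_iff_gcd_eq_one]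
    exact Int.gcd_div_gcd_div_gcd hGnat
  have key' : ∀ k, N ≤ k → q' * t (k + 1) = p' * t k := by
    intro k hk
    have h := key k hk
    have : G * (q' * t (k + 1)) = G * (p' * t k) := by
      rw [← mul_assoc, ← mul_assoc, hpG, hqG]; exact h
    exact mul_left_cancel₀ (ne_of_gt hGpos) this
  -- Step 2: infinite divisibility
  have hdvd : ∀ j : ℕ, ∀ k, N ≤ k → q' ^ j ∣ t k := by
    intro j
    induction j with
    | zero => intro k _; simp
    | succ j ih =>
      intro k hk
      have h1 : q' ^ (j + 1) ∣ q' * t (k + 1) := by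
        rw [pow_succ, mul_comm (q' ^ j) q']
        exact mul_dvd_mul_left q' (ih (k + 1) (by omega))
      rw [key' k hk] at h1
      exact (hcop.symm.pow_left).dvd_of_dvd_mul_left h1
  -- |q'| ≥ 2
  have hq'2 : (2 : ℤ) ≤ |q'| := by
    have hq'0 : q' ≠ 0 := by
      intro h; apply hqz; rw [← hqG, h, mul_zero]
    have hq'1 : q' ≠ 1 := by
      intro h
      apply hnint
      rw [← hqG, h, mul_one]; exact hGp
    have hq'm1 : q' ≠ -1 := by
      intro h
      apply hnint
      rw [← hqG, h, mul_neg_one]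
      exact (neg_dvd).mpr hGp
    rcases lt_trichotomy q' 0 with h | h | h
    · rw [abs_of_neg h]; omega
    · exact absurd h hq'0
    · rw [abs_of_pos h]; omega
  -- Step 3: t k = 0 for k ≥ N
  have tzero : ∀ k, N ≤ k → t k = 0 := by
    intro k hk
    by_contra htk
    set j : ℕ := (t k).natAbs with hjdef
    have hdj : q' ^ j ∣ t k := hdvd j k hk
    have habs : |q'| ^ j ≤ |t k| := by
      apply Int.le_of_dvd (abs_pos.2 htk)
      rw [← abs_pow]
      exact (abs_dvd _ _).mpr ((dvd_abs _ _).mpr hdj)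
    have h2j : (2 : ℤ) ^ j ≤ |q'| ^ j := pow_le_pow_left₀ (by norm_num) hq'2 j
    have hlt : |t k| < 2 ^ j := by
      have : (j : ℤ) < 2 ^ j := by exact_mod_cast (Nat.lt_two_pow_self : j < 2 ^ j)
      rw [Int.abs_eq_natAbs]
      exact_mod_cast this
    linarith
  -- Step 4: x (N + j*m) = x N
  have xeq : ∀ k, N ≤ k → x (k + m) = x k := by
    intro k hk
    have := tzero k hk
    simp only [htdef] at this
    omega
  have xiter : ∀ j : ℕ, x (N + j * m) = x N := by
    intro j
    induction j with
    | zero => simp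
    | succ j ih =>
      have he : N + (j + 1) * m = (N + j * m) + m := by ring
      rw [he, xeq (N + j * m) (by omega), ih]
  -- Step 5: unboundedness contradiction
  obtain ⟨n, hn⟩ := pow_unbounded_of_one_lt (((x N : ℝ) + 1) / ξ) hα1
  set k : ℕ := N + n * m with hkdef
  have hkn : n ≤ k := by
    have : n ≤ n * m := Nat.le_mul_of_pos_right n (by omega)
    omega
  have hpow : α ^ n ≤ α ^ k := pow_le_pow_right₀ (le_of_lt hα1) hkn
  have hbig : (x N : ℝ) + 1 < ξ * α ^ k := by
    have h1 : (x N : ℝ) + 1 < ξ * α ^ n := by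
      rw [div_lt_iff₀ hξ] at hn; linarith [hn]
    have h2 : ξ * α ^ n ≤ ξ * α ^ k := by
      apply mul_le_mul_of_nonneg_left hpow (le_of_lt hξ)
    linarith
  have hfl : x N + 1 ≤ x k := by
    rw [hxdef]
    apply Int.le_floor.2
    push_cast
    linarith
  have := xiter n
  rw [← hkdef] at this
  omega
end

section
/- Let R(x) = Π_{j=1}^{n} (q_j x − p_j) where p_j, q_j are integers with p_j > |q_j| > 0. Then the reduced length ℓ(R) := inf_Q L(RQ), where Q runs over real polynomials with leading coefficient 1 or constant coefficient 1, satisfies ℓ(R) ≤ p_1 ⋯ p_n. -/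
open Polynomial Finset Filter

/-- The length of a real polynomial: the sum of the absolute values of its coefficients. -/
noncomputable def polyLength (P : Polynomial ℝ) : ℝ :=
  ∑ i ∈ Finset.range (P.natDegree + 1), |P.coeff i|

lemma polyLength_nonneg (P : ℝ[X]) : 0 ≤ polyLength P :=
  Finset.sum_nonneg fun _ _ => abs_nonneg _

lemma polyLength_eq_sum_range {P : ℝ[X]} {N : ℕ} (h : P.natDegree < N) :
    polyLength P = ∑ i ∈ range N, |P.coeff i| := by
  refine Finset.sum_subset (Finset.range_subset_range.2 h) ?_
  intro i _ hi
  rw [P.coeff_eq_zero_of_natDegree_lt (by simpa using Nat.lt_of_succ_le (not_lt.1 (fun hlt => hi (Finset.mem_range.2 hlt))))]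
  · exact abs_zero

lemma polyLength_mul_le (P Q : ℝ[X]) :
    polyLength (P * Q) ≤ polyLength P * polyLength Q := by
  set N := P.natDegree + Q.natDegree + 1 with hN
  have hPQ : (P * Q).natDegree < N := lt_of_le_of_lt natDegree_mul_le (by omega)
  rw [polyLength_eq_sum_range hPQ,
      polyLength_eq_sum_range (show P.natDegree < N by omega),
      polyLength_eq_sum_range (show Q.natDegree < N by omega)]
  have step1 : ∑ k ∈ range N, |(P * Q).coeff k|
      ≤ ∑ k ∈ range N, ∑ x ∈ (range N ×ˢ range N).filter (fun x => x.1 + x.2 = k),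
          |P.coeff x.1| * |Q.coeff x.2| := by
    refine Finset.sum_le_sum fun k hk => ?_
    rw [coeff_mul]
    refine (Finset.abs_sum_le_sum_abs _ _).trans (le_of_eq ?_)
    have hanti : antidiagonal k = (range N ×ˢ range N).filter (fun x => x.1 + x.2 = k) := by
      ext x
      simp only [Finset.HasAntidiagonal.mem_antidiagonal, Finset.mem_filter, Finset.mem_product, Finset.mem_range]
      have hkN : k < N := Finset.mem_range.1 hk
      constructor
      · intro h; exact ⟨⟨by omega, by omega⟩, h⟩
      · intro h; exact h.2
    rw [hanti]
    exact Finset.sum_congr rfl fun x _ => abs_mul _ _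
  have step2 : ∑ k ∈ range N, ∑ x ∈ (range N ×ˢ range N).filter (fun x => x.1 + x.2 = k),
          |P.coeff x.1| * |Q.coeff x.2|
      ≤ ∑ k ∈ range (2 * N), ∑ x ∈ (range N ×ˢ range N).filter (fun x => x.1 + x.2 = k),
          |P.coeff x.1| * |Q.coeff x.2| := by
    refine Finset.sum_le_sum_of_subset_of_nonneg (Finset.range_subset_range.2 (by omega)) ?_
    intro k _ _
    exact Finset.sum_nonneg fun x _ => mul_nonneg (abs_nonneg _) (abs_nonneg _)
  have step3 : ∑ k ∈ range (2 * N), ∑ x ∈ (range N ×ˢ range N).filter (fun x => x.1 + x.2 = k),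
          |P.coeff x.1| * |Q.coeff x.2|
      = ∑ x ∈ range N ×ˢ range N, |P.coeff x.1| * |Q.coeff x.2| := by
    refine Finset.sum_fiberwise_of_maps_to ?_ _
    intro x hx
    simp only [Finset.mem_product, Finset.mem_range] at hx
    exact Finset.mem_range.2 (by omega)
  calc ∑ k ∈ range N, |(P * Q).coeff k| ≤ _ := step1
    _ ≤ _ := step2
    _ = _ := step3
    _ = (∑ i ∈ range N, |P.coeff i|) * ∑ j ∈ range N, |Q.coeff j| := by
        rw [Finset.sum_mul_sum, Finset.sum_product]

lemma polyLength_prod_le {ι : Type*} (s : Finset ι) (f : ι → ℝ[X]) :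
    polyLength (∏ j ∈ s, f j) ≤ ∏ j ∈ s, polyLength (f j) := by
  induction s using Finset.cons_induction with
  | empty => simp [polyLength]
  | cons a s ha ih =>
    rw [Finset.prod_cons, Finset.prod_cons]
    exact (polyLength_mul_le _ _).trans
      (mul_le_mul_of_nonneg_left ih (polyLength_nonneg _))

lemma polyLength_binom_le (a b : ℝ) (m : ℕ) (hm : 0 < m) :
    polyLength (C a * X ^ m - C b) ≤ |a| + |b| := by
  have hdeg : (C a * X ^ m - C b).natDegree < m + 1 := by
    refine Nat.lt_succ_of_le (le_trans (natDegree_sub_le _ _) ?_)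
    simp only [max_le_iff]
    constructor
    · exact le_trans natDegree_mul_le (by simp)
    · simp [Nat.le_of_lt hm]
  rw [polyLength_eq_sum_range hdeg]
  have hcoeff : ∀ i, (C a * X ^ m - C b).coeff i
      = (if i = m then a else 0) - (if i = 0 then b else 0) := by
    intro i
    simp [coeff_sub, coeff_C_mul, coeff_X_pow, coeff_C, mul_ite]
  rw [Finset.sum_range_succ]
  have h1 : |(C a * X ^ m - C b).coeff m| = |a| := by
    rw [hcoeff]; simp [hm.ne']
  have h2 : ∑ i ∈ range m, |(C a * X ^ m - C b).coeff i| = |b| := by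
    have : ∀ i ∈ range m, |(C a * X ^ m - C b).coeff i| = if i = 0 then |b| else 0 := by
      intro i hi
      have him : i ≠ m := Nat.ne_of_lt (Finset.mem_range.1 hi)
      rw [hcoeff]
      by_cases h0 : i = 0 <;> simp [him, h0, hm.ne, hm.ne', abs_neg]
    rw [Finset.sum_congr rfl this, Finset.sum_ite_eq' (range m) 0 (fun _ => |b|)]
    simp [hm]
  rw [h1, h2, add_comm]

/-- For `R(x) = Π (q_j x - p_j)` with `p_j > |q_j| > 0`, the reduced length
`ℓ(R) = inf_Q L(RQ)` satisfies `ℓ(R) ≤ p_1 ⋯ p_n`. -/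
theorem stmt15 (n : ℕ) (p q : Fin n → ℤ) (hpq : ∀ j, 0 < |q j| ∧ |q j| < p j) :
    sInf {l : ℝ | ∃ Q : Polynomial ℝ, (Q.leadingCoeff = 1 ∨ Q.coeff 0 = 1) ∧
        l = polyLength
          ((∏ j, (Polynomial.C (q j : ℝ) * Polynomial.X - Polynomial.C (p j : ℝ))) * Q)}
      ≤ ∏ j, (p j : ℝ) := by
  have hp : ∀ j, (0 : ℝ) < (p j : ℝ) := by
    intro j
    exact_mod_cast lt_trans (hpq j).1 (hpq j).2
  have hq : ∀ j, (0 : ℝ) < |(q j : ℝ)| := by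
    intro j
    have := (hpq j).1
    rw [← Int.cast_abs]
    exact_mod_cast this
  have hqp : ∀ j, |(q j : ℝ)| < (p j : ℝ) := by
    intro j
    have := (hpq j).2
    rw [← Int.cast_abs]
    exact_mod_cast this
  set S := {l : ℝ | ∃ Q : Polynomial ℝ, (Q.leadingCoeff = 1 ∨ Q.coeff 0 = 1) ∧
        l = polyLength
          ((∏ j, (Polynomial.C (q j : ℝ) * Polynomial.X - Polynomial.C (p j : ℝ))) * Q)} with hS
  have hbdd : BddBelow S := by
    refine ⟨0, fun l hl => ?_⟩
    obtain ⟨Q, -, rfl⟩ := hl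
    exact polyLength_nonneg _
  have key : ∀ k : ℕ, sInf S ≤ ∏ j, (|(q j : ℝ)| * (|(q j : ℝ)| / (p j : ℝ)) ^ k + (p j : ℝ)) := by
    intro k
    set Qf : Fin n → ℝ[X] := fun j =>
      C (((p j : ℝ)) ^ k)⁻¹ * ∑ i ∈ range (k + 1), (C (q j : ℝ) * X) ^ i * (C (p j : ℝ)) ^ (k - i)
      with hQf
    set Q : ℝ[X] := ∏ j, Qf j with hQ
    have hpk : ∀ j, ((p j : ℝ)) ^ k ≠ 0 := fun j => pow_ne_zero _ (hp j).ne'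
    have hfac : ∀ j, (C (q j : ℝ) * X - C (p j : ℝ)) * Qf j
        = C ((((p j : ℝ)) ^ k)⁻¹ * (q j : ℝ) ^ (k + 1)) * X ^ (k + 1) - C (p j : ℝ) := by
      intro j
      have hg := geom_sum₂_mul (C (q j : ℝ) * X) (C (p j : ℝ)) (k + 1)
      simp only [Nat.add_sub_cancel] at hg
      rw [hQf]
      have : (C (q j : ℝ) * X - C (p j : ℝ)) *
          (C (((p j : ℝ)) ^ k)⁻¹ * ∑ i ∈ range (k + 1), (C (q j : ℝ) * X) ^ i * (C (p j : ℝ)) ^ (k - i))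
          = C (((p j : ℝ)) ^ k)⁻¹ *
            ((∑ i ∈ range (k + 1), (C (q j : ℝ) * X) ^ i * (C (p j : ℝ)) ^ (k - i)) *
              (C (q j : ℝ) * X - C (p j : ℝ))) := by
        ring
      rw [this, hg, mul_sub, mul_pow, ← C_pow, ← C_pow, ← mul_assoc, ← C_mul, ← C_mul]
      congr 2
      rw [pow_succ, inv_mul_cancel_left₀ (hpk j)]
    have hRQ : (∏ j, (C (q j : ℝ) * X - C (p j : ℝ))) * Q
        = ∏ j, (C ((((p j : ℝ)) ^ k)⁻¹ * (q j : ℝ) ^ (k + 1)) * X ^ (k + 1) - C (p j : ℝ)) := by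
      rw [hQ, ← Finset.prod_mul_distrib]
      exact Finset.prod_congr rfl fun j _ => hfac j
    have hmem : polyLength ((∏ j, (C (q j : ℝ) * X - C (p j : ℝ))) * Q) ∈ S := by
      refine ⟨Q, Or.inr ?_, rfl⟩
      rw [hQ, coeff_zero_eq_eval_zero, eval_prod]
      rw [Finset.prod_eq_one]
      intro j _
      rw [hQf]
      simp only [eval_mul, eval_C, eval_finset_sum, eval_pow, eval_X, mul_zero]
      rw [Finset.sum_eq_single 0 (fun i _ hi => by simp [zero_pow hi]) (by simp)]
      simp [inv_mul_cancel₀ (hpk j)]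
    refine (csInf_le hbdd hmem).trans ?_
    rw [hRQ]
    refine (polyLength_prod_le _ _).trans ?_
    refine Finset.prod_le_prod (fun j _ => polyLength_nonneg _) ?_
    intro j _
    refine (polyLength_binom_le _ _ _ (Nat.succ_pos k)).trans (le_of_eq ?_)
    rw [abs_mul, abs_inv, abs_pow, abs_pow, abs_of_pos (hp j), pow_succ, div_pow]
    field_simp
  have hlim : Tendsto (fun k : ℕ => ∏ j, (|(q j : ℝ)| * (|(q j : ℝ)| / (p j : ℝ)) ^ k + (p j : ℝ)))
      atTop (nhds (∏ j, (p j : ℝ))) := by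
    refine tendsto_finset_prod _ fun j _ => ?_
    have hr0 : (0 : ℝ) ≤ |(q j : ℝ)| / (p j : ℝ) := div_nonneg (abs_nonneg _) (hp j).le
    have hr1 : |(q j : ℝ)| / (p j : ℝ) < 1 := (div_lt_one (hp j)).2 (hqp j)
    have := ((tendsto_pow_atTop_nhds_zero_of_lt_one hr0 hr1).const_mul |(q j : ℝ)|).add_const
      ((p j : ℝ))
    simpa using this
  exact ge_of_tendsto' hlim key
end

section
/- Let p_j, q_j (1 ≤ j ≤ n) be integers with p_j > |q_j| > 0 and set R(x) = Π_{j=1}^{n}(q_j x − p_j). Then the reduced length ℓ(R) equals exactly p_1⋯p_n; in particular ℓ(R) ≥ M(R) where M(R) denotes the Mahler measure of R. -/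
open Polynomial Finset Filter

lemma polyLength_eq_sum (P : ℝ[X]) (s : Finset ℕ) (hs : P.support ⊆ s) :
    polyLength P = ∑ i ∈ s, |P.coeff i| := by
  have h0 : ∀ (t : Finset ℕ), P.support ⊆ t → ∑ i ∈ t, |P.coeff i| = ∑ i ∈ P.support, |P.coeff i| := by
    intro t ht
    refine (Finset.sum_subset ht ?_).symm
    intro x _ hx
    simp [Polynomial.notMem_support_iff.mp hx]
  rw [h0 s hs]
  exact h0 _ P.supp_subset_range_natDegree_succ

noncomputable def n2 (P : ℝ[X]) : ℝ := ∑ i ∈ P.support, (P.coeff i)^2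

lemma n2_eq_sum (P : ℝ[X]) (s : Finset ℕ) (hs : P.support ⊆ s) :
    n2 P = ∑ i ∈ s, (P.coeff i)^2 := by
  refine Finset.sum_subset hs ?_
  intro x _ hx
  simp [Polynomial.notMem_support_iff.mp hx]

lemma coeff_sq_le_n2 (P : ℝ[X]) (k : ℕ) : (P.coeff k)^2 ≤ n2 P := by
  by_cases hk : k ∈ P.support
  · exact Finset.single_le_sum (f := fun i => (P.coeff i)^2) (fun i _ => sq_nonneg _) hk
  · rw [Polynomial.notMem_support_iff.mp hk]
    simpa [n2] using Finset.sum_nonneg (fun i _ => sq_nonneg (P.coeff i))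

lemma n2_le_sq_polyLength (P : ℝ[X]) : n2 P ≤ (polyLength P)^2 := by
  rw [n2_eq_sum P _ P.supp_subset_range_natDegree_succ]
  unfold polyLength
  calc ∑ i ∈ Finset.range (P.natDegree+1), (P.coeff i)^2
      = ∑ i ∈ Finset.range (P.natDegree+1), |P.coeff i|^2 := by simp [sq_abs]
    _ ≤ _ := Finset.sum_sq_le_sq_sum_of_nonneg (fun i _ => abs_nonneg _)

lemma abs_coeff_le_polyLength (P : ℝ[X]) (k : ℕ) : |P.coeff k| ≤ polyLength P := by
  by_cases hk : k ∈ P.support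
  · rw [polyLength_eq_sum P _ (subset_refl _)]
    exact Finset.single_le_sum (f := fun i => |P.coeff i|) (fun i _ => abs_nonneg _) hk
  · rw [Polynomial.notMem_support_iff.mp hk]
    simpa using polyLength_nonneg P

lemma abs_coeff_le_of_n2_le (P : ℝ[X]) (k : ℕ) (c : ℝ) (h : (c)^2 ≤ n2 P) : |c| ≤ polyLength P := by
  have h2 : c^2 ≤ (polyLength P)^2 := h.trans (n2_le_sq_polyLength P)
  have h3 := polyLength_nonneg P
  rw [abs_le]
  constructor <;> nlinarith

lemma n2_linear_mul (a b : ℝ) (f : ℝ[X]) :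
    n2 ((C a * X - C b) * f) =
      (a^2 + b^2) * (∑ i ∈ range (f.natDegree + 1), (f.coeff i)^2)
        - 2*a*b*(∑ i ∈ range (f.natDegree + 1), f.coeff i * f.coeff (i+1)) := by
  set D := f.natDegree with hD
  have hdeg : ((C a * X - C b) * f).natDegree ≤ 1 + D := by
    refine (Polynomial.natDegree_mul_le).trans ?_
    have h1 : (C a * X - C b).natDegree ≤ 1 := by
      have := Polynomial.natDegree_linear_le (a := a) (b := -b)
      simpa [sub_eq_add_neg] using this
    omega
  have hsupp : ((C a * X - C b) * f).support ⊆ range (D + 1 + 1) :=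
    Polynomial.supp_subset_range (by omega)
  rw [n2_eq_sum _ _ hsupp]
  have hc0 : ((C a * X - C b) * f).coeff 0 = -(b * f.coeff 0) := by
    rw [Polynomial.mul_coeff_zero]
    simp
  have hcs : ∀ i : ℕ, ((C a * X - C b) * f).coeff (i+1) = a * f.coeff i - b * f.coeff (i+1) := by
    intro i
    have h : (C a * X - C b) * f = C a * (X * f) - C b * f := by ring
    rw [h, Polynomial.coeff_sub, Polynomial.coeff_C_mul, Polynomial.coeff_C_mul,
      Polynomial.coeff_X_mul]
  rw [Finset.sum_range_succ']
  rw [hc0]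
  have hrw : ∑ i ∈ range (D+1), (((C a * X - C b) * f).coeff (i+1))^2
      = ∑ i ∈ range (D+1), ((a * f.coeff i - b * f.coeff (i+1))^2) := by
    exact Finset.sum_congr rfl fun i _ => by rw [hcs i]
  rw [hrw]
  have hshift : ∑ i ∈ range (D+1), (f.coeff (i+1))^2
      = (∑ i ∈ range (D+1), (f.coeff i)^2) - (f.coeff 0)^2 := by
    have h1 : ∑ i ∈ range (D+2), (f.coeff i)^2
        = (∑ i ∈ range (D+1), (f.coeff (i+1))^2) + (f.coeff 0)^2 :=
      Finset.sum_range_succ' (fun i => (f.coeff i)^2) (D+1)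
    have h2 : ∑ i ∈ range (D+2), (f.coeff i)^2
        = (∑ i ∈ range (D+1), (f.coeff i)^2) + (f.coeff (D+1))^2 :=
      Finset.sum_range_succ (fun i => (f.coeff i)^2) (D+1)
    have h3 : f.coeff (D+1) = 0 := Polynomial.coeff_eq_zero_of_natDegree_lt (by omega)
    rw [h3] at h2
    simp at h2
    linarith
  have hexp : ∑ i ∈ range (D+1), ((a * f.coeff i - b * f.coeff (i+1))^2)
      = a^2 * (∑ i ∈ range (D+1), (f.coeff i)^2)
        + b^2 * (∑ i ∈ range (D+1), (f.coeff (i+1))^2)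
        - 2*a*b*(∑ i ∈ range (D+1), f.coeff i * f.coeff (i+1)) := by
    rw [Finset.mul_sum, Finset.mul_sum, Finset.mul_sum]
    rw [← Finset.sum_add_distrib, ← Finset.sum_sub_distrib]
    exact Finset.sum_congr rfl fun i _ => by ring
  rw [hexp, hshift]
  ring

lemma n2_flip (a b : ℝ) (f : ℝ[X]) :
    n2 ((C a * X - C b) * f) = n2 ((C b * X - C a) * f) := by
  rw [n2_linear_mul, n2_linear_mul]; ring
lemma n2_prod_flip {ι : Type*} [DecidableEq ι] (s : Finset ι) (a b : ι → ℝ) :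
    ∀ Q : ℝ[X], n2 ((∏ j ∈ s, (C (a j) * X - C (b j))) * Q)
      = n2 ((∏ j ∈ s, (C (b j) * X - C (a j))) * Q) := by
  induction s using Finset.induction_on with
  | empty => intro Q; simp
  | insert _ _ hj ih =>
    rename_i j s'
    intro Q
    rw [Finset.prod_insert hj, Finset.prod_insert hj, mul_assoc, mul_assoc,
      n2_flip (a j) (b j)]
    have h1 : (C (b j) * X - C (a j)) * ((∏ x ∈ s', (C (a x) * X - C (b x))) * Q)
        = (∏ x ∈ s', (C (a x) * X - C (b x))) * ((C (b j) * X - C (a j)) * Q) := by ring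
    have h2 : (C (b j) * X - C (a j)) * ((∏ x ∈ s', (C (b x) * X - C (a x))) * Q)
        = (∏ x ∈ s', (C (b x) * X - C (a x))) * ((C (b j) * X - C (a j)) * Q) := by ring
    rw [h1, h2]
    exact ih _

lemma lower_bound (n : ℕ) (p q : Fin n → ℤ) (hpq : ∀ j, 0 < |q j| ∧ |q j| < p j)
    (Q : ℝ[X]) (hQ : Q.leadingCoeff = 1 ∨ Q.coeff 0 = 1) :
    (∏ j, (p j : ℝ)) ≤ polyLength ((∏ j, (C (q j : ℝ) * X - C (p j : ℝ))) * Q) := by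
  have hp : ∀ j, (0:ℝ) < (p j : ℤ) := by
    intro j
    have := (hpq j).1.trans (hpq j).2
    exact_mod_cast this
  have hProdPos : (0:ℝ) < ∏ j, (p j : ℝ) := Finset.prod_pos fun j _ => hp j
  rcases hQ with hQ | hQ
  · -- leading coefficient case
    have hflip := n2_prod_flip Finset.univ (fun j => (q j : ℝ)) (fun j => (p j : ℝ)) Q
    set R' : ℝ[X] := ∏ j, (C (p j : ℝ) * X - C (q j : ℝ)) with hR'
    have hlead : (R' * Q).leadingCoeff = ∏ j, (p j : ℝ) := by
      rw [Polynomial.leadingCoeff_mul, hQ, mul_one, hR', Polynomial.leadingCoeff_prod]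
      refine Finset.prod_congr rfl fun j _ => ?_
      have : C (p j : ℝ) * X - C (q j : ℝ) = C (p j : ℝ) * X + C (-(q j : ℝ)) := by
        rw [map_neg, sub_eq_add_neg]
      rw [this, Polynomial.leadingCoeff_linear (hp j).ne']
    have hsq : (∏ j, (p j : ℝ))^2 ≤ n2 ((∏ j, (C (q j : ℝ) * X - C (p j : ℝ))) * Q) := by
      rw [hflip]
      have := coeff_sq_le_n2 (R' * Q) ((R' * Q).natDegree)
      rwa [← Polynomial.leadingCoeff, hlead] at this
    have := abs_coeff_le_of_n2_le _ 0 _ hsq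
    rwa [abs_of_pos hProdPos] at this
  · -- constant coefficient case
    have hc : ((∏ j, (C (q j : ℝ) * X - C (p j : ℝ))) * Q).coeff 0 = ∏ j, (-(p j : ℝ)) := by
      rw [Polynomial.mul_coeff_zero, hQ, mul_one, Polynomial.coeff_zero_eq_eval_zero,
        Polynomial.eval_prod]
      refine Finset.prod_congr rfl fun j _ => ?_
      simp
    have := abs_coeff_le_polyLength ((∏ j, (C (q j : ℝ) * X - C (p j : ℝ))) * Q) 0
    rw [hc] at this
    refine le_trans ?_ this
    rw [Finset.abs_prod]
    refine le_of_eq (Finset.prod_congr rfl fun j _ => ?_)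
    rw [abs_neg, abs_of_pos (hp j)]

lemma polyLength_add_le (f g : ℝ[X]) : polyLength (f + g) ≤ polyLength f + polyLength g := by
  set s := (f.support ∪ g.support) ∪ (f+g).support with hs
  have h1 : (f+g).support ⊆ s := Finset.subset_union_right
  have h2 : f.support ⊆ s := Finset.subset_union_left.trans (Finset.subset_union_left (s₂ := (f+g).support))
  have h3 : g.support ⊆ s := Finset.subset_union_right.trans (Finset.subset_union_left (s₂ := (f+g).support))
  rw [polyLength_eq_sum (f+g) s h1, polyLength_eq_sum f s h2,
    polyLength_eq_sum g s h3, ← Finset.sum_add_distrib]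
  refine Finset.sum_le_sum fun i _ => ?_
  rw [Polynomial.coeff_add]
  exact abs_add_le _ _

lemma polyLength_C_mul (c : ℝ) (f : ℝ[X]) : polyLength (C c * f) = |c| * polyLength f := by
  rw [polyLength_eq_sum (C c * f) f.support ?_, polyLength_eq_sum f f.support (subset_refl _),
    Finset.mul_sum]
  · exact Finset.sum_congr rfl fun i _ => by rw [Polynomial.coeff_C_mul, abs_mul]
  · intro x hx
    rw [Polynomial.mem_support_iff, Polynomial.coeff_C_mul] at hx
    rw [Polynomial.mem_support_iff]
    exact fun h => hx (by rw [h, mul_zero])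

lemma polyLength_mul_X_pow (N : ℕ) (f : ℝ[X]) : polyLength (f * X^N) = polyLength f := by
  rw [polyLength_eq_sum (f * X^N) (f.support.map ⟨_, add_left_injective N⟩) ?_,
    polyLength_eq_sum f f.support (subset_refl _), Finset.sum_map]
  · refine Finset.sum_congr rfl fun i _ => ?_
    simp only [Function.Embedding.coeFn_mk]
    rw [Polynomial.coeff_mul_X_pow]
  · intro x hx
    rw [Polynomial.mem_support_iff, Polynomial.coeff_mul_X_pow'] at hx
    by_cases hN : N ≤ x
    · simp only [hN, if_true] at hx
      rw [Finset.mem_map]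
      exact ⟨x - N, Polynomial.mem_support_iff.mpr hx, by simp; omega⟩
    · simp [hN] at hx

lemma polyLength_one : polyLength (1 : ℝ[X]) = 1 := by
  unfold polyLength
  simp

lemma polyLength_binom_mul (a b : ℝ) (N : ℕ) (f : ℝ[X]) :
    polyLength ((C a * X^N - C b) * f) ≤ (|a| + |b|) * polyLength f := by
  have h : (C a * X^N - C b) * f = C a * (f * X^N) + C (-b) * f := by ring_nf; rw [map_neg]; ring
  rw [h]
  refine (polyLength_add_le _ _).trans ?_
  rw [polyLength_C_mul, polyLength_C_mul, polyLength_mul_X_pow, abs_neg]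
  ring_nf
  exact le_refl _

lemma polyLength_prod_binom_le {ι : Type*} [DecidableEq ι] (s : Finset ι) (a b : ι → ℝ) (N : ℕ) :
    polyLength (∏ j ∈ s, (C (a j) * X^N - C (b j))) ≤ ∏ j ∈ s, (|a j| + |b j|) := by
  induction s using Finset.induction_on with
  | empty => simp [polyLength_one]
  | insert _ _ hj ih =>
    rename_i j s'
    rw [Finset.prod_insert hj, Finset.prod_insert hj]
    refine (polyLength_binom_mul _ _ _ _).trans ?_
    refine mul_le_mul_of_nonneg_left ih (by positivity)

lemma telescope_factor (q p : ℝ) (hp : p ≠ 0) (N : ℕ) :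
    (C q * X - C p) * (∑ i ∈ range N, (C (q/p) * X)^i)
      = C (p * (q/p)^N) * X^N - C p := by
  have h1 : C q * X - C p = (C (q/p) * X - 1) * C p := by
    rw [sub_mul, one_mul, mul_comm (C (q/p)) X, mul_assoc, ← map_mul, div_mul_cancel₀ _ hp,
      mul_comm X _]
  rw [h1, mul_comm _ (C p), mul_assoc, mul_comm (C (q/p) * X - 1), geom_sum_mul]
  rw [mul_sub, mul_one, mul_pow, ← map_pow, ← mul_assoc, ← map_mul]

lemma upper_bound (n : ℕ) (p q : Fin n → ℤ) (hpq : ∀ j, 0 < |q j| ∧ |q j| < p j)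
    (ε : ℝ) (hε : 0 < ε) :
    ∃ Q : ℝ[X], Q.coeff 0 = 1 ∧
      polyLength ((∏ j, (C (q j : ℝ) * X - C (p j : ℝ))) * Q) < (∏ j, (p j : ℝ)) + ε := by
  have hp : ∀ j, (0:ℝ) < (p j : ℝ) := by
    intro j; exact_mod_cast (hpq j).1.trans (hpq j).2
  have hqlt : ∀ j, |(q j : ℝ)| < (p j : ℝ) := by
    intro j
    have := (hpq j).2
    rw [show |(q j : ℝ)| = ((|q j| : ℤ) : ℝ) by push_cast; rfl]
    exact_mod_cast this
  set t : Fin n → ℝ := fun j => |(q j : ℝ)| / (p j : ℝ) with ht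
  have ht0 : ∀ j, 0 ≤ t j := fun j => div_nonneg (abs_nonneg _) (hp j).le
  have ht1 : ∀ j, t j < 1 := fun j => (div_lt_one (hp j)).mpr (hqlt j)
  have hF : Tendsto (fun N : ℕ => ∏ j, ((p j : ℝ) * t j ^ N + (p j : ℝ))) atTop
      (nhds (∏ j, (p j : ℝ))) := by
    have h := tendsto_finset_prod (f := fun j (N : ℕ) => (p j : ℝ) * t j ^ N + (p j : ℝ))
      Finset.univ (fun j _ =>
        (((tendsto_pow_atTop_nhds_zero_of_lt_one (ht0 j) (ht1 j)).const_mul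
          ((p j : ℝ))).add_const ((p j : ℝ))))
    simpa using h
  obtain ⟨N, hN1, hN2⟩ : ∃ N : ℕ, 1 ≤ N ∧
      (∏ j, ((p j : ℝ) * t j ^ N + (p j : ℝ))) < (∏ j, (p j : ℝ)) + ε :=
    ((eventually_ge_atTop 1).and (hF.eventually
      (gt_mem_nhds (lt_add_of_pos_right _ hε)))).exists
  refine ⟨∏ j, ∑ i ∈ range N, (C ((q j : ℝ)/(p j : ℝ)) * X)^i, ?_, ?_⟩
  · rw [Polynomial.coeff_zero_eq_eval_zero, Polynomial.eval_prod]
    have : ∀ j : Fin n, Polynomial.eval 0 (∑ i ∈ range N, (C ((q j : ℝ)/(p j : ℝ)) * X)^i)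
        = 1 := by
      intro j
      rw [Polynomial.eval_finset_sum]
      have : ∀ i ∈ range N, Polynomial.eval 0 ((C ((q j : ℝ)/(p j : ℝ)) * X)^i)
          = (0:ℝ)^i := by
        intro i _
        simp
      rw [Finset.sum_congr rfl this, zero_geom_sum]
      simp only [if_neg (by omega : ¬ N = 0)]
    simp [this]
  · rw [← Finset.prod_mul_distrib]
    have heq : ∀ j ∈ Finset.univ (α := Fin n),
        (C (q j : ℝ) * X - C (p j : ℝ)) * (∑ i ∈ range N, (C ((q j : ℝ)/(p j : ℝ)) * X)^i)
        = C ((p j : ℝ) * ((q j : ℝ)/(p j : ℝ))^N) * X^N - C (p j : ℝ) := fun j _ =>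
      telescope_factor _ _ (hp j).ne' N
    rw [Finset.prod_congr rfl heq]
    refine lt_of_le_of_lt ((polyLength_prod_binom_le Finset.univ _ _ N).trans ?_) hN2
    refine le_of_eq (Finset.prod_congr rfl fun j _ => ?_)
    rw [abs_mul, abs_of_pos (hp j), abs_pow, abs_div, abs_of_pos (hp j)]

lemma mahler_eq (n : ℕ) (p q : Fin n → ℤ) (hpq : ∀ j, 0 < |q j| ∧ |q j| < p j) :
    ‖(((∏ j, (Polynomial.C (q j : ℝ) * Polynomial.X - Polynomial.C (p j : ℝ))).map
          (algebraMap ℝ ℂ)).leadingCoeff)‖ *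
      ((((∏ j, (Polynomial.C (q j : ℝ) * Polynomial.X - Polynomial.C (p j : ℝ))).map
          (algebraMap ℝ ℂ)).roots).map (fun z => max 1 (‖z‖))).prod
      = ∏ j, (p j : ℝ) := by
  have hp : ∀ j, (0:ℝ) < (p j : ℝ) := by
    intro j; exact_mod_cast (hpq j).1.trans (hpq j).2
  have hq0 : ∀ j, (q j : ℝ) ≠ 0 := by
    intro j
    have h1 : q j ≠ 0 := by
      intro h
      have := (hpq j).1
      rw [h] at this
      simp at this
    exact_mod_cast h1
  have hqlt : ∀ j, |(q j : ℝ)| ≤ (p j : ℝ) := by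
    intro j
    have := (hpq j).2
    rw [show |(q j : ℝ)| = ((|q j| : ℤ) : ℝ) by push_cast; rfl]
    exact_mod_cast this.le
  set a : Fin n → ℂ := fun j => ((q j : ℝ) : ℂ) with haa
  set b : Fin n → ℂ := fun j => ((p j : ℝ) : ℂ) with hbb
  have ha : ∀ j, a j ≠ 0 := fun j => by
    simp only [haa, ne_eq, Complex.ofReal_eq_zero]; exact hq0 j
  have hmap : (∏ j, (Polynomial.C (q j : ℝ) * Polynomial.X - Polynomial.C (p j : ℝ))).map
      (algebraMap ℝ ℂ) = ∏ j, (C (a j) * X - C (b j)) := by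
    rw [Polynomial.map_prod]
    refine Finset.prod_congr rfl fun j _ => ?_
    rw [Polynomial.map_sub, Polynomial.map_mul, Polynomial.map_C, Polynomial.map_C,
      Polynomial.map_X]
    rfl
  have hfac : ∀ j, C (a j) * X - C (b j) = C (a j) * (X - C (b j / a j)) := by
    intro j
    rw [mul_sub, ← map_mul, mul_div_cancel₀ _ (ha j)]
  have hne : (∏ j, (C (a j) * X - C (b j))) ≠ 0 := by
    refine Finset.prod_ne_zero_iff.mpr fun j _ => ?_
    rw [hfac j]
    exact mul_ne_zero (Polynomial.C_ne_zero.mpr (ha j)) (Polynomial.X_sub_C_ne_zero _)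
  have hlead : (∏ j, (C (a j) * X - C (b j))).leadingCoeff = ∏ j, a j := by
    rw [Polynomial.leadingCoeff_prod]
    refine Finset.prod_congr rfl fun j _ => ?_
    rw [show C (a j) * X - C (b j) = C (a j) * X + C (-(b j)) by rw [map_neg, sub_eq_add_neg]]
    exact Polynomial.leadingCoeff_linear (ha j)
  have hroots : (∏ j, (C (a j) * X - C (b j))).roots
      = Finset.univ.val.map (fun j => b j / a j) := by
    rw [Polynomial.roots_prod _ _ hne]
    refine Eq.trans (Multiset.bind_congr fun j _ => ?_) (Multiset.bind_singleton _ _)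
    rw [hfac j, Polynomial.roots_C_mul _ (ha j), Polynomial.roots_X_sub_C]
  rw [hmap, hlead, hroots, Multiset.map_map]
  rw [show ‖∏ j, a j‖ = ∏ j, |(q j : ℝ)| by
    rw [norm_prod]; exact Finset.prod_congr rfl fun j _ => by rw [Complex.norm_real, Real.norm_eq_abs]]
  rw [← Finset.prod_eq_multiset_prod Finset.univ
    ((fun z => 1 ⊔ ‖z‖) ∘ fun j => b j / a j), ← Finset.prod_mul_distrib]
  refine Finset.prod_congr rfl fun j _ => ?_
  have habs : ‖b j / a j‖ = (p j : ℝ) / |(q j : ℝ)| := by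
    rw [norm_div, haa, hbb]
    simp only [Complex.norm_real, Real.norm_eq_abs]
    rw [abs_of_pos (hp j)]
  have h1le : (1:ℝ) ≤ (p j : ℝ) / |(q j : ℝ)| := by
    rw [le_div_iff₀ (abs_pos.mpr (hq0 j))]
    simpa using hqlt j
  simp only [Function.comp_apply, habs, max_eq_right h1le]
  rw [mul_div_cancel₀ _ (ne_of_gt (abs_pos.mpr (hq0 j)))]


/-- For `R(x) = Π (q_j x - p_j)` with `p_j > |q_j| > 0`, the reduced length
`ℓ(R)` equals `p_1 ⋯ p_n`; in particular `ℓ(R) ≥ M(R)`, the Mahler measure of `R`. -/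
theorem stmt16 (n : ℕ) (p q : Fin n → ℤ) (hpq : ∀ j, 0 < |q j| ∧ |q j| < p j) :
    sInf {l : ℝ | ∃ Q : Polynomial ℝ, (Q.leadingCoeff = 1 ∨ Q.coeff 0 = 1) ∧
        l = polyLength
          ((∏ j, (Polynomial.C (q j : ℝ) * Polynomial.X - Polynomial.C (p j : ℝ))) * Q)}
      = ∏ j, (p j : ℝ) ∧
    ‖(((∏ j, (Polynomial.C (q j : ℝ) * Polynomial.X - Polynomial.C (p j : ℝ))).map
          (algebraMap ℝ ℂ)).leadingCoeff)‖ *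
      ((((∏ j, (Polynomial.C (q j : ℝ) * Polynomial.X - Polynomial.C (p j : ℝ))).map
          (algebraMap ℝ ℂ)).roots).map (fun z => max 1 (‖z‖))).prod
      ≤ sInf {l : ℝ | ∃ Q : Polynomial ℝ, (Q.leadingCoeff = 1 ∨ Q.coeff 0 = 1) ∧
        l = polyLength
          ((∏ j, (Polynomial.C (q j : ℝ) * Polynomial.X - Polynomial.C (p j : ℝ))) * Q)} := by
  set S : Set ℝ := {l : ℝ | ∃ Q : Polynomial ℝ, (Q.leadingCoeff = 1 ∨ Q.coeff 0 = 1) ∧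
        l = polyLength
          ((∏ j, (Polynomial.C (q j : ℝ) * Polynomial.X - Polynomial.C (p j : ℝ))) * Q)}
    with hS
  have hSne : S.Nonempty :=
    ⟨polyLength ((∏ j, (Polynomial.C (q j : ℝ) * Polynomial.X - Polynomial.C (p j : ℝ))) * 1),
      1, Or.inl Polynomial.leadingCoeff_one, rfl⟩
  have hbdd : BddBelow S := by
    refine ⟨0, fun x hx => ?_⟩
    obtain ⟨Q, _, rfl⟩ := hx
    exact polyLength_nonneg _
  have hlow : ∀ x ∈ S, (∏ j, (p j : ℝ)) ≤ x := by
    intro x hx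
    obtain ⟨Q, hQ, rfl⟩ := hx
    exact lower_bound n p q hpq Q hQ
  have h1 : sInf S = ∏ j, (p j : ℝ) := by
    refine le_antisymm ?_ (le_csInf hSne hlow)
    refine le_of_forall_pos_le_add fun ε hε => ?_
    obtain ⟨Q, hQ0, hQlt⟩ := upper_bound n p q hpq ε hε
    exact (csInf_le hbdd ⟨Q, Or.inr hQ0, rfl⟩).trans hQlt.le
  refine ⟨h1, ?_⟩
  rw [h1, mahler_eq n p q hpq]
end

section
/- Let α be a real algebraic number with |α| > 1 and let F(x) ∈ ℝ[x] be nonzero with F(x) ∉ ℚ(α)[x]. Then the set of limit values in ℝ/ℤ of the sequence (F(k) α^k mod 1)_{k≥1} is infinite. -/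
open Polynomial Filter Finset Topology Set

noncomputable section

namespace Stmt17Aux




/-- Shift endomorphism on real sequences. -/
def shiftEnd : Module.End ℝ (ℕ → ℝ) where
  toFun c := fun k => c (k + 1)
  map_add' _ _ := rfl
  map_smul' _ _ := rfl

/-- Application of a polynomial shift operator. -/
def op (U : ℝ[X]) (c : ℕ → ℝ) : ℕ → ℝ := Polynomial.aeval shiftEnd U c

lemma shiftEnd_pow (j : ℕ) (c : ℕ → ℝ) (k : ℕ) : (shiftEnd ^ j) c k = c (k + j) := by
  induction j generalizing c k with
  | zero => rfl
  | succ n ih =>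
      have : (shiftEnd ^ (n+1)) c = (shiftEnd ^ n) (shiftEnd c) := by
        rw [pow_succ]; rfl
      rw [this, ih]
      simp [shiftEnd]; ring_nf

/-- F1 : explicit formula for `op`. -/
lemma op_eq_sum (U : ℝ[X]) (c : ℕ → ℝ) (k : ℕ) :
    op U c k = ∑ j ∈ Finset.range (U.natDegree + 1), U.coeff j * c (k + j) := by
  unfold op
  rw [Polynomial.aeval_eq_sum_range]
  have : (∑ i ∈ Finset.range (U.natDegree + 1), U.coeff i • shiftEnd ^ i) c k
      = ∑ i ∈ Finset.range (U.natDegree + 1), U.coeff i • ((shiftEnd ^ i) c k) := by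
    rw [LinearMap.sum_apply]
    simp only [LinearMap.smul_apply]
    rw [Finset.sum_apply]
    simp only [Pi.smul_apply]
  rw [this]
  simp only [smul_eq_mul, shiftEnd_pow]

lemma op_mul (U V : ℝ[X]) (c : ℕ → ℝ) : op (U * V) c = op U (op V c) := by
  unfold op
  rw [map_mul]
  rfl

lemma op_add (U V : ℝ[X]) (c : ℕ → ℝ) : op (U + V) c = op U c + op V c := by
  unfold op; rw [map_add]; rfl

lemma op_one (c : ℕ → ℝ) : op 1 c = c := by
  unfold op; rw [map_one]; rfl

lemma op_sub_seq (U : ℝ[X]) (c d : ℕ → ℝ) : op U (c - d) = op U c - op U d := by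
  unfold op; exact map_sub _ _ _

lemma op_add_seq (U : ℝ[X]) (c d : ℕ → ℝ) : op U (c + d) = op U c + op U d := by
  unfold op; exact map_add _ _ _

lemma op_zero_seq (U : ℝ[X]) : op U (0 : ℕ → ℝ) = 0 := by
  unfold op; exact map_zero _


variable (α : ℝ)

/-- twisted polynomial -/
def twist (U G : ℝ[X]) : ℝ[X] :=
  ∑ j ∈ Finset.range (U.natDegree + 1), (U.coeff j * α ^ j) • G.comp (X + C (j : ℝ))

/-- L1 -/
lemma op_poly_mul_pow (U G : ℝ[X]) :
    op U (fun k => G.eval (k : ℝ) * α ^ k) = fun k : ℕ => (twist α U G).eval (k : ℝ) * α ^ k := by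
  funext k
  rw [op_eq_sum]
  unfold twist
  rw [eval_finset_sum, Finset.sum_mul]
  refine Finset.sum_congr rfl fun j hj => ?_
  rw [eval_smul, eval_comp, eval_add, eval_X, eval_C, smul_eq_mul]
  push_cast
  ring

lemma coeff_comp_add_of_le (G : ℝ[X]) (c : ℝ) {N : ℕ} (hN : G.natDegree ≤ N) :
    (G.comp (X + C c)).coeff N = G.coeff N := by
  by_cases hG : G = 0
  · simp [hG]
  have hdeg : (G.comp (X + C c)).natDegree = G.natDegree := by
    rw [natDegree_comp]
    simp [natDegree_X_add_C]
  rcases lt_or_eq_of_le hN with h | h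
  · rw [coeff_eq_zero_of_natDegree_lt (by omega), coeff_eq_zero_of_natDegree_lt h]
  · subst h
    have h2 : (G.comp (X + C c)).coeff G.natDegree = (G.comp (X + C c)).leadingCoeff := by
      rw [Polynomial.leadingCoeff, hdeg]
    rw [h2, leadingCoeff_comp (by rw [natDegree_X_add_C]; omega), leadingCoeff_X_add_C,
      one_pow, mul_one, Polynomial.leadingCoeff]

/-- T2 -/
lemma coeff_twist_of_le (U G : ℝ[X]) {N : ℕ} (hN : G.natDegree ≤ N) :
    (twist α U G).coeff N = U.eval α * G.coeff N := by
  unfold twist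
  rw [finset_sum_coeff]
  simp only [coeff_smul]
  rw [eval_eq_sum_range, Finset.sum_mul]
  refine Finset.sum_congr rfl fun j hj => ?_
  rw [coeff_comp_add_of_le _ _ hN, smul_eq_mul]

/-- T1 -/
lemma natDegree_twist_le (U G : ℝ[X]) : (twist α U G).natDegree ≤ G.natDegree := by
  unfold twist
  refine natDegree_sum_le_of_forall_le _ _ fun j hj => ?_
  refine (natDegree_smul_le _ _).trans ?_
  rw [natDegree_comp, natDegree_X_add_C, mul_one]

/-- T3 -/
lemma twist_sub (U G G' : ℝ[X]) : twist α U (G - G') = twist α U G - twist α U G' := by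
  unfold twist
  rw [← Finset.sum_sub_distrib]
  refine Finset.sum_congr rfl fun j hj => ?_
  rw [sub_comp, smul_sub]

/-- if twist is zero and U(α) ≠ 0 then G = 0 -/
lemma eq_zero_of_twist_eq_zero {U G : ℝ[X]} (hU : U.eval α ≠ 0)
    (h : twist α U G = 0) : G = 0 := by
  by_contra hG
  have h1 := coeff_twist_of_le α U G (le_refl G.natDegree)
  rw [h, coeff_zero, coeff_natDegree] at h1
  exact mul_ne_zero hU (leadingCoeff_ne_zero.mpr hG) h1.symm

/-- L2 : kill lemma -/
lemma op_pow_kill {P : ℝ[X]} (hP : P.eval α = 0) :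
    ∀ n (G : ℝ[X]), G.natDegree ≤ n →
      op (P ^ (n + 1)) (fun k => G.eval (k : ℝ) * α ^ k) = 0 := by
  intro n
  induction n with
  | zero =>
      intro G hG
      rw [pow_one, op_poly_mul_pow]
      have : twist α P G = 0 := by
        ext N
        rw [coeff_twist_of_le α P G (hG.trans (Nat.zero_le N)), hP, zero_mul, coeff_zero]
      rw [this]
      funext k; simp
  | succ n ih =>
      intro G hG
      have hstep : (twist α P G).natDegree ≤ n := by
        refine natDegree_le_iff_coeff_eq_zero.mpr fun N hN => ?_
        have hGN : G.natDegree ≤ N := hG.trans hN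
        rw [coeff_twist_of_le α P G hGN, hP, zero_mul]
      calc op (P ^ (n + 1 + 1)) (fun k => G.eval (k : ℝ) * α ^ k)
          = op (P ^ (n + 1)) (op P (fun k => G.eval (k : ℝ) * α ^ k)) := by
            rw [← op_mul, ← pow_succ]
        _ = 0 := by
            rw [op_poly_mul_pow]
            exact ih (twist α P G) hstep

/-- U1 : uniqueness -/
lemma eq_zero_of_op_monic {R' : ℝ[X]} (hmo : R'.Monic) {e : ℕ → ℝ}
    (h : ∀ k, op R' e k = 0) (h0 : ∀ k < R'.natDegree, e k = 0) : ∀ k, e k = 0 := by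
  set D := R'.natDegree with hD
  intro m
  induction m using Nat.strong_induction_on with
  | _ m ih =>
    by_cases hm : m < D
    · exact h0 m hm
    · push_neg at hm
      have hk := h (m - D)
      rw [op_eq_sum, ← hD] at hk
      rw [Finset.sum_range_succ] at hk
      have hcD : R'.coeff D = 1 := hmo.coeff_natDegree
      have hmD : m - D + D = m := Nat.sub_add_cancel hm
      rw [hcD, one_mul, hmD] at hk
      have hsum : ∑ j ∈ Finset.range D, R'.coeff j * e (m - D + j) = 0 := by
        refine Finset.sum_eq_zero fun j hj => ?_
        have hj' : j < D := Finset.mem_range.mp hj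
        have : m - D + j < m := by omega
        rw [ih _ this, mul_zero]
      rw [hsum, zero_add] at hk
      exact hk

/-- interpolation polynomial recovering a solution of `(E - α)^μ`. -/
def interpQ (α : ℝ) (μ : ℕ) (g : ℕ → ℝ) : ℝ[X] :=
  Lagrange.interpolate (Finset.range μ) (Nat.cast : ℕ → ℝ) (fun i => g i * (α ^ i)⁻¹)

lemma natDegree_interpQ_lt (α : ℝ) {μ : ℕ} (hμ : 0 < μ) (g : ℕ → ℝ) :
    (interpQ α μ g).natDegree < μ := by
  rcases eq_or_ne (interpQ α μ g) 0 with h | h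
  · rw [h, natDegree_zero]; exact hμ
  · rw [natDegree_lt_iff_degree_lt h]
    have := Lagrange.degree_interpolate_lt (r := fun i => g i * (α ^ i)⁻¹)
      (Nat.cast_injective.injOn (s := ↑(Finset.range μ)))
    rwa [Finset.card_range] at this

/-- L3 -/
lemma rep_of_op_pow (α : ℝ) (hα0 : α ≠ 0) (μ : ℕ) (g : ℕ → ℝ)
    (h : ∀ k, op ((X - C α) ^ μ) g k = 0) :
    ∀ k : ℕ, g k = (interpQ α μ g).eval (k : ℝ) * α ^ k := by
  rcases Nat.eq_zero_or_pos μ with hμ | hμ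
  · subst hμ
    intro k
    have h1 := h k
    rw [pow_zero] at h1
    unfold op at h1
    rw [map_one] at h1
    have h2 : g k = 0 := h1
    rw [h2]
    unfold interpQ
    rw [Finset.range_zero, Lagrange.interpolate_empty]
    simp
  set q := interpQ α μ g with hqdef
  set e : ℕ → ℝ := (fun k : ℕ => g k) - (fun k : ℕ => q.eval (k : ℝ) * α ^ k) with he
  have hqdeg : q.natDegree ≤ μ - 1 := by
    have h5 := natDegree_interpQ_lt α hμ g
    rw [← hqdef] at h5
    omega
  have hkill : op ((X - C α) ^ μ) (fun k => q.eval (k : ℝ) * α ^ k) = 0 := by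
    have := op_pow_kill α (P := X - C α) (by simp) (μ - 1) q hqdeg
    rwa [Nat.sub_add_cancel hμ] at this
  have hope : ∀ k, op ((X - C α) ^ μ) e k = 0 := by
    intro k
    rw [he, op_sub_seq]
    simp only [Pi.sub_apply]
    rw [h k]
    have : op ((X - C α) ^ μ) (fun k => q.eval (k : ℝ) * α ^ k) k = 0 := by rw [hkill]; rfl
    rw [this]; ring
  have hmo : ((X - C α) ^ μ).Monic := (monic_X_sub_C α).pow μ
  have hdeg : ((X - C α) ^ μ).natDegree = μ := by
    rw [natDegree_pow, natDegree_X_sub_C, mul_one]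
  have h0 : ∀ k < ((X - C α) ^ μ).natDegree, e k = 0 := by
    intro k hk
    rw [hdeg] at hk
    have hnode : q.eval ((k : ℕ) : ℝ) = g k * (α ^ k)⁻¹ := by
      rw [hqdef]
      unfold interpQ
      exact Lagrange.eval_interpolate_at_node _ (Nat.cast_injective.injOn)
        (Finset.mem_range.mpr hk)
    simp only [he, Pi.sub_apply]
    rw [hnode]
    field_simp
    ring
  have := eq_zero_of_op_monic hmo hope h0
  intro k
  have hk := this k
  simp only [he, Pi.sub_apply] at hk
  linarith

/-- bounded polynomial sequence times α^k bounded implies zero -/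
lemma poly_eq_zero_of_mul_pow_bounded {α : ℝ} (hα : 1 < |α|) {p : ℝ[X]} {M : ℝ}
    (h : ∀ k : ℕ, |p.eval (k : ℝ) * α ^ k| ≤ M) : p = 0 := by
  have hb : ∀ k : ℕ, |p.eval (k : ℝ)| ≤ M := by
    intro k
    have h1 : (1:ℝ) ≤ |α| ^ k := one_le_pow₀ hα.le
    have h2 : |p.eval (k : ℝ)| * 1 ≤ |p.eval (k : ℝ)| * |α| ^ k := by
      apply mul_le_mul_of_nonneg_left h1 (abs_nonneg _)
    calc |p.eval (k : ℝ)| = |p.eval (k : ℝ)| * 1 := (mul_one _).symm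
      _ ≤ |p.eval (k : ℝ)| * |α| ^ k := h2
      _ = |p.eval (k : ℝ) * α ^ k| := by rw [abs_mul, abs_pow]
      _ ≤ M := h k
  -- p has degree ≤ 0
  have hdeg : ¬ 0 < p.degree := by
    intro hd
    have := Polynomial.abs_tendsto_atTop p hd
    have h2 : Tendsto (fun k : ℕ => |p.eval (k : ℝ)|) atTop atTop :=
      this.comp tendsto_natCast_atTop_atTop
    obtain ⟨k, hk⟩ := (h2.eventually_ge_atTop (M + 1)).exists
    have := hb k
    linarith
  have hc : p = C (p.coeff 0) := by
    rcases eq_or_ne p 0 with h0 | h0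
    · rw [h0]; simp
    · have : p.degree ≤ 0 := not_lt.mp hdeg
      exact Polynomial.eq_C_of_degree_le_zero this
  -- now |c| ≤ M / |α|^k → 0
  have hc0 : p.coeff 0 = 0 := by
    by_contra hne
    have hlim : Tendsto (fun k : ℕ => M * (|α|⁻¹) ^ k) atTop (𝓝 0) := by
      have h1 : |α|⁻¹ < 1 := by
        rw [inv_lt_one_iff₀]; right; exact hα
      have h2 : (0:ℝ) ≤ |α|⁻¹ := inv_nonneg.mpr (abs_nonneg _)
      have := tendsto_pow_atTop_nhds_zero_of_lt_one h2 h1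
      simpa using (this.const_mul M)
    have hineq : ∀ k : ℕ, |p.coeff 0| ≤ M * (|α|⁻¹) ^ k := by
      intro k
      have hk := h k
      rw [hc] at hk
      rw [eval_C] at hk
      rw [abs_mul, abs_pow] at hk
      have hpow : (0:ℝ) < |α| ^ k := pow_pos (lt_trans one_pos hα) k
      rw [inv_pow, ← div_eq_mul_inv]
      rw [le_div_iff₀ hpow]
      exact hk
    have hle : |p.coeff 0| ≤ 0 := ge_of_tendsto' hlim hineq
    have : |p.coeff 0| = 0 := le_antisymm hle (abs_nonneg _)
    exact hne (abs_eq_zero.mp this)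
  rw [hc, hc0]; simp

lemma cluster_structure (y : ℕ → ℝ) (hy : ∀ k, y k ∈ Set.Ico (0:ℝ) 1)
    (hfin : {pt : AddCircle (1:ℝ) |
      MapClusterPt pt atTop (fun k => ((y k : ℝ) : AddCircle (1:ℝ)))}.Finite) :
    ∃ S : Set ℝ, S.Finite ∧ S.Nonempty ∧
      (∀ ε > 0, ∀ᶠ k in atTop, ∃ σ ∈ S, |y k - σ| < ε) := by
  set S : Set ℝ := {x | MapClusterPt x atTop y} with hSdef
  have hle : map y atTop ≤ 𝓟 (Set.Icc (0:ℝ) 1) := by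
    rw [le_principal_iff, Filter.mem_map]
    filter_upwards with k
    exact Set.mem_Icc_of_Ico (hy k)
  have hS_sub : S ⊆ Set.Icc 0 1 := by
    intro x hx
    have h1 : ClusterPt x (𝓟 (Set.Icc (0:ℝ) 1)) := hx.clusterPt.mono hle
    have := mem_closure_iff_clusterPt.mpr h1
    rwa [isClosed_Icc.closure_eq] at this
  have himg : ∀ x ∈ S, ((x : ℝ) : AddCircle (1:ℝ)) ∈
      {pt : AddCircle (1:ℝ) | MapClusterPt pt atTop (fun k => ((y k : ℝ) : AddCircle (1:ℝ)))} := by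
    intro x hx
    have hcont : ContinuousAt (fun t : ℝ => (t : AddCircle (1:ℝ))) x :=
      (AddCircle.continuous_mk' 1).continuousAt
    exact hx.continuousAt_comp hcont
  have hSfin : S.Finite := by
    have hinj : Set.InjOn (fun t : ℝ => (t : AddCircle (1:ℝ))) (S ∩ Set.Ico 0 1) := by
      intro x hx x' hx' hxx
      have h0 : x ∈ Set.Ico (0:ℝ) (0 + 1) := by simpa using hx.2
      have h0' : x' ∈ Set.Ico (0:ℝ) (0 + 1) := by simpa using hx'.2
      exact (AddCircle.coe_eq_coe_iff_of_mem_Ico h0 h0').mp hxx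
    have h1 : (S ∩ Set.Ico 0 1).Finite := by
      apply Set.Finite.of_finite_image _ hinj
      apply hfin.subset
      rintro z ⟨x, hx, rfl⟩
      exact himg x hx.1
    have h2 : S ⊆ (S ∩ Set.Ico 0 1) ∪ {1} := by
      intro x hx
      rcases lt_or_ge x 1 with h | h
      · exact Or.inl ⟨hx, (hS_sub hx).1, h⟩
      · right
        have := (hS_sub hx).2
        simp only [Set.mem_singleton_iff]
        linarith
    exact (h1.union (Set.finite_singleton 1)).subset h2
  have hSne : S.Nonempty := by
    obtain ⟨x, _, hx⟩ := isCompact_Icc.exists_clusterPt (f := map y atTop) hle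
    exact ⟨x, hx⟩
  refine ⟨S, hSfin, hSne, ?_⟩
  intro ε hε
  by_contra hcon
  rw [not_eventually] at hcon
  have hcon' : ∃ᶠ k in atTop, y k ∈ Set.Icc (0:ℝ) 1 ∩ {t | ∀ σ ∈ S, ε ≤ |t - σ|} := by
    refine hcon.mono fun k hk => ?_
    refine ⟨Set.mem_Icc_of_Ico (hy k), fun σ hσ => ?_⟩
    push_neg at hk
    exact hk σ hσ
  set C : Set ℝ := Set.Icc (0:ℝ) 1 ∩ {t | ∀ σ ∈ S, ε ≤ |t - σ|} with hC
  have hCclosed : IsClosed C := by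
    apply isClosed_Icc.inter
    have : {t : ℝ | ∀ σ ∈ S, ε ≤ |t - σ|} = ⋂ σ ∈ S, {t | ε ≤ |t - σ|} := by
      ext t; simp
    rw [this]
    refine isClosed_biInter fun σ _ => ?_
    exact isClosed_le continuous_const ((continuous_id.sub continuous_const).abs)
  have hCcomp : IsCompact C :=
    IsCompact.of_isClosed_subset isCompact_Icc hCclosed Set.inter_subset_left
  have hne : (map y atTop ⊓ 𝓟 C).NeBot := by
    have : ∃ᶠ z in map y atTop, z ∈ C := by rwa [frequently_map]
    exact (frequently_iff_neBot (p := fun z => z ∈ C)).mp this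
  obtain ⟨x, hxC, hx⟩ := hCcomp.exists_clusterPt (f := map y atTop ⊓ 𝓟 C) inf_le_right
  have hxS : x ∈ S := (hx.mono inf_le_left : ClusterPt x (map y atTop))
  have := hxC.2 x hxS
  simp at this
  linarith

lemma exists_delta {T : Set ℝ} (hT : T.Finite) :
    ∃ δ : ℝ, 0 < δ ∧ ∀ x : ℝ, (∃ N : ℤ, ∃ t ∈ T, x = -(N : ℝ) - t) → |x| < δ → x = 0 := by
  rcases T.eq_empty_or_nonempty with rfl | hTne
  · exact ⟨1, one_pos, by rintro x ⟨N, t, ht, rfl⟩ _; simp at ht⟩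
  obtain ⟨M, hM⟩ : ∃ M : ℝ, ∀ t ∈ T, |t| ≤ M := by
    obtain ⟨M, hM⟩ := (hT.image abs).bddAbove
    exact ⟨M, fun t ht => hM (Set.mem_image_of_mem abs ht)⟩
  set E : Set ℝ := (fun p : ℤ × ℝ => -(p.1 : ℝ) - p.2) ''
    ((↑(Finset.Icc (-(⌈M⌉ + 2)) (⌈M⌉ + 2)) : Set ℤ) ×ˢ T) with hE
  have hEfin : E.Finite := ((Finset.Icc _ _).finite_toSet.prod hT).image _
  classical
  set W : Finset ℝ := hEfin.toFinset.filter (fun x => x ≠ 0) with hW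
  set δ : ℝ := if h : W.Nonempty then min 1 ((W.image abs).min' (h.image abs)) else 1 with hδ
  have hδ1 : δ ≤ 1 := by
    rw [hδ]; split
    · exact min_le_left _ _
    · exact le_refl 1
  have hδpos : 0 < δ := by
    rw [hδ]; split
    case isTrue h =>
      rw [lt_min_iff]
      refine ⟨one_pos, ?_⟩
      obtain ⟨w, hw⟩ := Finset.mem_image.mp ((W.image abs).min'_mem (h.image abs))
      rw [← hw.2]
      have : w ≠ 0 := (Finset.mem_filter.mp hw.1).2
      exact abs_pos.mpr this
    case isFalse => exact one_pos
  refine ⟨δ, hδpos, ?_⟩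
  rintro x ⟨N, t, ht, rfl⟩ hx
  set x := -(N : ℝ) - t
  have hxE : x ∈ E := by
    rw [hE]
    refine ⟨(N, t), ?_, rfl⟩
    refine ⟨?_, ht⟩
    simp only [Finset.coe_Icc, Set.mem_Icc]
    have h1 : |x| < 1 := lt_of_lt_of_le hx hδ1
    have h2 : |(N : ℝ)| ≤ 1 + M := by
      have heq : (N : ℝ) = -x - t := by simp only [x]; ring
      rw [heq]
      calc |(-x - t)| ≤ |(-x)| + |t| := abs_sub _ _
        _ = |x| + |t| := by rw [abs_neg]
        _ ≤ 1 + M := add_le_add h1.le (hM t ht)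
    have hceil : M ≤ (⌈M⌉ : ℝ) := Int.le_ceil M
    constructor
    · have : -((⌈M⌉ : ℝ) + 2) ≤ (N : ℝ) := by
        have := (abs_le.mp h2).1
        linarith
      exact_mod_cast (by push_cast; linarith : ((-(⌈M⌉ + 2) : ℤ) : ℝ) ≤ (N : ℝ))
    · have : (N : ℝ) ≤ (⌈M⌉ : ℝ) + 2 := by
        have := (abs_le.mp h2).2
        linarith
      exact_mod_cast (by push_cast; linarith : ((N : ℝ)) ≤ ((⌈M⌉ + 2 : ℤ) : ℝ))
  by_contra hx0
  have hxW : x ∈ W := by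
    rw [hW, Finset.mem_filter]
    exact ⟨hEfin.mem_toFinset.mpr hxE, hx0⟩
  have h1 : (W.image abs).min' ⟨_, Finset.mem_image_of_mem abs hxW⟩ ≤ |x| :=
    Finset.min'_le _ _ (Finset.mem_image_of_mem abs hxW)
  have h2 : δ ≤ |x| := by
    rw [hδ]
    have hne : W.Nonempty := ⟨x, hxW⟩
    rw [dif_pos hne]
    exact le_trans (min_le_right _ _) h1
  linarith

lemma poly_eq_zero_of_mul_pow_tendsto_zero {α : ℝ} (hα : 1 < |α|) {p : ℝ[X]}
    (h : Tendsto (fun k : ℕ => p.eval (k : ℝ) * α ^ k) atTop (𝓝 0)) : p = 0 := by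
  have habs : Tendsto (fun k : ℕ => |p.eval (k : ℝ) * α ^ k|) atTop (𝓝 0) := by
    simpa using h.abs
  have hb : ∀ᶠ k : ℕ in atTop, |p.eval (k : ℝ)| ≤ 1 := by
    filter_upwards [habs.eventually_le_const one_pos] with k hk
    have h1 : (1:ℝ) ≤ |α| ^ k := one_le_pow₀ hα.le
    have : |p.eval (k : ℝ)| * 1 ≤ |p.eval (k : ℝ)| * |α| ^ k :=
      mul_le_mul_of_nonneg_left h1 (abs_nonneg _)
    calc |p.eval (k : ℝ)| = |p.eval (k : ℝ)| * 1 := (mul_one _).symm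
      _ ≤ |p.eval (k : ℝ)| * |α| ^ k := this
      _ = |p.eval (k : ℝ) * α ^ k| := by rw [abs_mul, abs_pow]
      _ ≤ 1 := hk
  have hdeg : ¬ 0 < p.degree := by
    intro hd
    have h2 : Tendsto (fun k : ℕ => |p.eval (k : ℝ)|) atTop atTop :=
      (Polynomial.abs_tendsto_atTop p hd).comp tendsto_natCast_atTop_atTop
    obtain ⟨k, hk1, hk2⟩ := ((h2.eventually_ge_atTop 2).and hb).exists
    linarith
  have hc : p = C (p.coeff 0) := by
    rcases eq_or_ne p 0 with h0 | h0
    · rw [h0]; simp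
    · exact Polynomial.eq_C_of_degree_le_zero (not_lt.mp hdeg)
  have hc0 : p.coeff 0 = 0 := by
    by_contra hne
    have hineq : ∀ k : ℕ, |p.coeff 0| ≤ |p.eval (k:ℝ) * α ^ k| := by
      intro k
      have he : p.eval (k:ℝ) = p.coeff 0 := by
        conv_lhs => rw [hc]
        rw [eval_C]
      rw [he, abs_mul, abs_pow]
      have h1 : (1:ℝ) ≤ |α| ^ k := one_le_pow₀ hα.le
      nlinarith [abs_nonneg (p.coeff 0)]
    have hle : |p.coeff 0| ≤ 0 := ge_of_tendsto' habs hineq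
    exact hne (abs_eq_zero.mp (le_antisymm hle (abs_nonneg _)))
  rw [hc, hc0]; simp


set_option synthInstance.maxHeartbeats 1000000 in
set_option maxHeartbeats 1000000 in
lemma mem_of_forall_dual (K : IntermediateField ℚ ℝ) (x : ℝ)
    (h : ∀ Φ : ℝ →ₗ[K] ℝ, Φ 1 = 0 → Φ x = 0) : x ∈ K := by
  by_contra hx
  have hx' : x ∉ Submodule.span K ({(1:ℝ)} : Set ℝ) := by
    intro h'
    obtain ⟨κ, hk⟩ := Submodule.mem_span_singleton.mp h'
    apply hx
    rw [← hk]
    have : κ • (1:ℝ) = (κ : ℝ) := by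
      rw [Algebra.smul_def, mul_one]
      rfl
    rw [this]
    exact κ.2
  set U := Submodule.span K ({(1:ℝ)} : Set ℝ) with hU
  have hxq : Submodule.Quotient.mk x ≠ (0 : ℝ ⧸ U) := by
    rw [Ne, Submodule.Quotient.mk_eq_zero]
    exact hx'
  obtain ⟨f, hf⟩ : ∃ f : Module.Dual K (ℝ ⧸ U), f (Submodule.Quotient.mk x) ≠ 0 := by
    by_contra hall
    push_neg at hall
    exact hxq ((Module.forall_dual_apply_eq_zero_iff K _).mp hall)
  set Φ : ℝ →ₗ[K] ℝ := (Algebra.linearMap K ℝ).comp (f.comp U.mkQ) with hΦ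
  have hΦ1 : Φ 1 = 0 := by
    have h1 : U.mkQ 1 = 0 := by
      rw [Submodule.mkQ_apply, Submodule.Quotient.mk_eq_zero]
      exact Submodule.mem_span_singleton_self 1
    simp [hΦ, h1]
  have h2 := h Φ hΦ1
  have h3 : (algebraMap K ℝ) (f (Submodule.Quotient.mk x)) = 0 := h2
  have h4 : f (Submodule.Quotient.mk x) = 0 := by
    exact_mod_cast (RingHom.injective (algebraMap K ℝ)) (by simpa using h3)
  exact hf h4

end Stmt17Aux

set_option maxHeartbeats 2000000 in
set_option synthInstance.maxHeartbeats 1000000 in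
/-- If `α` is a real algebraic number with `|α| > 1` and `F ∈ ℝ[x]` is nonzero with
some coefficient outside `ℚ(α)`, then the set of limit values of `(F(k) α^k mod 1)` is
infinite. -/
theorem stmt17 (α : ℝ) (hαalg : IsAlgebraic ℚ α) (hα : 1 < |α|)
    (F : Polynomial ℝ) (hF : F ≠ 0)
    (hFnot : ∃ i : ℕ, F.coeff i ∉ IntermediateField.adjoin ℚ ({α} : Set ℝ)) :
    {pt : AddCircle (1 : ℝ) | MapClusterPt pt Filter.atTop
      (fun k : ℕ => ((F.eval (k : ℝ) * α ^ k : ℝ) : AddCircle (1 : ℝ)))}.Infinite := by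
  classical
  by_contra hinf
  rw [Set.not_infinite] at hinf
  set K := IntermediateField.adjoin ℚ ({α} : Set ℝ) with hK
  have hα0 : α ≠ 0 := by
    intro h; rw [h, abs_zero] at hα; linarith
  set u : ℕ → ℝ := fun k => F.eval (k : ℝ) * α ^ k with hu
  set y : ℕ → ℝ := fun k => Int.fract (u k) with hy
  set m : ℕ → ℤ := fun k => ⌊u k⌋ with hm
  have hy_mem : ∀ k, y k ∈ Set.Ico (0:ℝ) 1 := fun k => ⟨Int.fract_nonneg _, Int.fract_lt_one _⟩
  have hyu : ∀ k, y k = u k - (m k : ℝ) := fun k => rfl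
  -- circle images agree
  have hcoe : (fun k : ℕ => ((y k : ℝ) : AddCircle (1:ℝ)))
      = (fun k : ℕ => ((u k : ℝ) : AddCircle (1:ℝ))) := by
    funext k
    show ((Int.fract (u k) : ℝ) : AddCircle (1:ℝ)) = ((u k : ℝ) : AddCircle (1:ℝ))
    have h1 : ((⌊u k⌋ : ℝ) : AddCircle (1:ℝ)) = 0 := by
      rw [AddCircle.coe_eq_zero_iff]
      exact ⟨⌊u k⌋, by simp⟩
    calc ((Int.fract (u k) : ℝ) : AddCircle (1:ℝ))
        = ((u k - (⌊u k⌋ : ℝ) : ℝ) : AddCircle (1:ℝ)) := rfl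
      _ = ((u k : ℝ) : AddCircle (1:ℝ)) - (((⌊u k⌋ : ℝ) : ℝ) : AddCircle (1:ℝ)) := rfl
      _ = ((u k : ℝ) : AddCircle (1:ℝ)) := by rw [h1, sub_zero]
  obtain ⟨S, hSfin, hSne, hconv⟩ := Stmt17Aux.cluster_structure y hy_mem (by rw [hcoe]; exact hinf)
  -- nearest point selection
  have hchoice : ∀ k, ∃ σ ∈ S, ∀ σ' ∈ S, |y k - σ| ≤ |y k - σ'| := by
    intro k
    obtain ⟨σ, hσ, hmin⟩ := Set.exists_min_image S (fun σ => |y k - σ|) hSfin hSne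
    exact ⟨σ, hσ, hmin⟩
  choose s hsS hsmin using hchoice
  set e : ℕ → ℝ := fun k => y k - s k with he
  have htend : Filter.Tendsto e Filter.atTop (𝓝 0) := by
    rw [NormedAddCommGroup.tendsto_nhds_zero]
    intro ε hε
    filter_upwards [hconv ε hε] with k hk
    obtain ⟨σ, hσ, hlt⟩ := hk
    rw [Real.norm_eq_abs]
    exact lt_of_le_of_lt (hsmin k σ hσ) hlt
  -- integer polynomial
  obtain ⟨Pz, hPz0, hPzα⟩ := (IsFractionRing.isAlgebraic_iff ℤ ℚ ℝ).mpr hαalg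
  set n := F.natDegree with hn
  set Rz : Polynomial ℤ := Pz ^ (n+1) with hRz
  set RR : Polynomial ℝ := Rz.map (Int.castRingHom ℝ) with hRR
  have hPrα : (Pz.map (Int.castRingHom ℝ)).eval α = 0 := by
    rw [Polynomial.eval_map, ← algebraMap_int_eq, ← Polynomial.aeval_def]
    exact hPzα
  have hRReq : RR = (Pz.map (Int.castRingHom ℝ)) ^ (n+1) := by
    rw [hRR, hRz, Polynomial.map_pow]
  have hrecu : Stmt17Aux.op RR u = 0 := by
    rw [hRReq, hu]
    exact Stmt17Aux.op_pow_kill α hPrα n F (le_refl n)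
  set D := RR.natDegree with hD
  have hrec : ∀ k, ∑ j ∈ Finset.range (D+1), RR.coeff j * u (k+j) = 0 := by
    intro k
    rw [← Stmt17Aux.op_eq_sum, hrecu]
    rfl
  have hcoeffRR : ∀ j, RR.coeff j = ((Rz.coeff j : ℤ) : ℝ) := by
    intro j; rw [hRR, Polynomial.coeff_map]; rfl
  -- v tends to 0 and is eventually 0
  set v : ℕ → ℝ := fun k => ∑ j ∈ Finset.range (D+1), RR.coeff j * e (k+j) with hv
  have hv0 : Filter.Tendsto v Filter.atTop (𝓝 0) := by
    have hterm : ∀ j ∈ Finset.range (D+1),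
        Filter.Tendsto (fun k => RR.coeff j * e (k+j)) Filter.atTop (𝓝 0) := by
      intro j _
      have h1 : Filter.Tendsto (fun k => e (k + j)) Filter.atTop (𝓝 0) :=
        htend.comp (tendsto_add_atTop_nat j)
      simpa using h1.const_mul (RR.coeff j)
    have := tendsto_finset_sum _ hterm
    simpa [hv] using this
  set Tset : Set ℝ := (fun t : Fin (D+1) → ℝ => ∑ j : Fin (D+1), RR.coeff j * t j) ''
    (Set.pi Set.univ (fun _ : Fin (D+1) => S)) with hTset
  have hTfin : Tset.Finite := ((Set.Finite.pi (fun _ => hSfin)).image _)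
  have hvform : ∀ k, ∃ N : ℤ, ∃ t ∈ Tset, v k = -(N : ℝ) - t := by
    intro k
    refine ⟨∑ j ∈ Finset.range (D+1), Rz.coeff j * m (k+j),
      ∑ j ∈ Finset.range (D+1), RR.coeff j * s (k + j), ?_, ?_⟩
    · rw [hTset]
      refine ⟨fun j : Fin (D+1) => s (k + j), ?_, ?_⟩
      · intro j _
        exact hsS (k + j)
      · rw [← Fin.sum_univ_eq_sum_range (fun j => RR.coeff j * s (k + j))]
    · have hcast : ((∑ j ∈ Finset.range (D+1), Rz.coeff j * m (k+j) : ℤ) : ℝ)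
          = ∑ j ∈ Finset.range (D+1), RR.coeff j * (m (k+j) : ℝ) := by
        push_cast
        refine Finset.sum_congr rfl fun j _ => ?_
        rw [hcoeffRR j]
      have h1 : v k = (∑ j ∈ Finset.range (D+1), RR.coeff j * u (k+j))
          - (∑ j ∈ Finset.range (D+1), RR.coeff j * (m (k+j) : ℝ))
          - (∑ j ∈ Finset.range (D+1), RR.coeff j * s (k+j)) := by
        rw [hv, ← Finset.sum_sub_distrib, ← Finset.sum_sub_distrib]
        refine Finset.sum_congr rfl fun j _ => ?_
        simp only [he]
        rw [hyu (k+j)]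
        ring
      rw [h1, hrec k, hcast]
      ring
  obtain ⟨δ, hδpos, hδ⟩ := Stmt17Aux.exists_delta hTfin
  have hvzero : ∀ᶠ k in Filter.atTop, v k = 0 := by
    have hev : ∀ᶠ k in Filter.atTop, |v k| < δ := by
      have := hv0.abs
      simp only [abs_zero] at this
      exact this.eventually_lt_const hδpos
    filter_upwards [hev] with k hk
    obtain ⟨N, t, ht, hvk⟩ := hvform k
    exact hδ (v k) ⟨N, t, ht, hvk⟩ hk
  obtain ⟨K₀, hK₀⟩ := Filter.eventually_atTop.mp hvzero
  -- the sequence A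
  set a : ℕ → ℝ := fun k => (m k : ℝ) + s k with ha
  have hau : ∀ k, a k = u k - e k := by
    intro k; simp only [ha, he]; rw [hyu k]; ring
  set A : ℕ → ℝ := fun k => a (k + K₀) with hA
  have hrecA : ∀ k, Stmt17Aux.op RR A k = 0 := by
    intro k
    rw [Stmt17Aux.op_eq_sum]
    have hva : ∑ j ∈ Finset.range (D+1), RR.coeff j * a ((k + K₀) + j) = 0 := by
      have hstep : ∑ j ∈ Finset.range (D+1), RR.coeff j * a ((k + K₀) + j)
          = (∑ j ∈ Finset.range (D+1), RR.coeff j * u ((k + K₀) + j)) - v (k + K₀) := by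
        rw [hv, ← Finset.sum_sub_distrib]
        refine Finset.sum_congr rfl fun j _ => ?_
        rw [hau ((k + K₀) + j)]
        ring
      rw [hstep, hrec (k + K₀), hK₀ (k + K₀) (Nat.le_add_left _ _)]
      ring
    rw [← hva]
    refine Finset.sum_congr rfl fun j _ => ?_
    congr 1
    simp only [hA]
    congr 1
    omega
  -- K-level objects
  have hαK : α ∈ K := IntermediateField.subset_adjoin ℚ {α} (Set.mem_singleton α)
  set αK : K := ⟨α, hαK⟩ with hαKdef
  set fK := algebraMap K ℝ with hfK
  have hfKα : fK αK = α := rfl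
  have hfKinj : Function.Injective fK := RingHom.injective fK
  set RK : Polynomial K := Rz.map (Int.castRingHom K) with hRK
  have hRKmap : RK.map fK = RR := by
    rw [hRK, hRR, Polynomial.map_map]
    congr 1
  haveI hKchar : CharZero K := by
    have : Function.Injective (algebraMap ℚ K) := RingHom.injective _
    exact charZero_of_injective_algebraMap this
  have hRK0 : RK ≠ 0 := by
    intro hcon
    have hRz0 : Rz ≠ 0 := pow_ne_zero _ hPz0
    apply hRz0
    apply Polynomial.map_injective (Int.castRingHom K) Int.cast_injective
    rw [← hRK, hcon, Polynomial.map_zero]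
  have hRRα : RR.eval α = 0 := by
    rw [hRReq, Polynomial.eval_pow, hPrα, zero_pow (Nat.succ_ne_zero n)]
  have hRKroot : RK.IsRoot αK := by
    have h1 : RR.eval α = fK (RK.eval αK) := by
      rw [← hRKmap, ← hfKα, Polynomial.eval_map, Polynomial.eval₂_hom]
    apply hfKinj
    rw [← h1, hRRα, map_zero]
  set μ := RK.rootMultiplicity αK with hμ
  have hμpos : 0 < μ := (Polynomial.rootMultiplicity_pos hRK0).mpr hRKroot
  set TK : Polynomial K := RK /ₘ (Polynomial.X - Polynomial.C αK) ^ μ with hTK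
  have hfact : (Polynomial.X - Polynomial.C αK) ^ μ * TK = RK :=
    Polynomial.pow_mul_divByMonic_rootMultiplicity_eq RK αK
  have hTKα : TK.eval αK ≠ 0 := Polynomial.eval_divByMonic_pow_rootMultiplicity_ne_zero αK hRK0
  have hcop : IsCoprime ((Polynomial.X - Polynomial.C αK) ^ μ) TK := by
    apply IsCoprime.pow_left
    rw [(Polynomial.irreducible_X_sub_C αK).coprime_iff_not_dvd]
    rw [Polynomial.dvd_iff_isRoot]
    exact hTKα
  obtain ⟨AK, BK, hbez⟩ := hcop
  set Ar := AK.map fK with hAr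
  set Br := BK.map fK with hBr
  set Tr := TK.map fK with hTr
  have hmapXC : ((Polynomial.X - Polynomial.C αK) ^ μ).map fK
      = (Polynomial.X - Polynomial.C α) ^ μ := by
    rw [Polynomial.map_pow, Polynomial.map_sub, Polynomial.map_X, Polynomial.map_C, hfKα]
  have hfactR : (Polynomial.X - Polynomial.C α) ^ μ * Tr = RR := by
    rw [← hRKmap, ← hfact, Polynomial.map_mul, hmapXC]
  have hbezR : Ar * (Polynomial.X - Polynomial.C α) ^ μ + Br * Tr = 1 := by
    have := congrArg (Polynomial.map fK) hbez
    rwa [Polynomial.map_add, Polynomial.map_mul, Polynomial.map_mul, Polynomial.map_one, hmapXC]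
      at this
  have hTrα : Tr.eval α ≠ 0 := by
    rw [hTr, ← hfKα, Polynomial.eval_map, Polynomial.eval₂_hom]
    intro hcon
    exact hTKα (hfKinj (by simpa using hcon))
  -- decomposition of A
  set g : ℕ → ℝ := Stmt17Aux.op (Br * Tr) A with hg
  have hrecA' : Stmt17Aux.op RR A = 0 := funext hrecA
  have hgkill : ∀ k, Stmt17Aux.op ((Polynomial.X - Polynomial.C α) ^ μ) g k = 0 := by
    intro k
    have h1 : Stmt17Aux.op ((Polynomial.X - Polynomial.C α) ^ μ) g
        = Stmt17Aux.op Br (Stmt17Aux.op RR A) := by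
      rw [hg, ← Stmt17Aux.op_mul, ← Stmt17Aux.op_mul]
      congr 1
      rw [← hfactR]
      ring
    rw [h1, hrecA', Stmt17Aux.op_zero_seq]
    rfl
  set q : Polynomial ℝ := Stmt17Aux.interpQ α μ g with hq
  have hgq : ∀ k : ℕ, g k = q.eval (k : ℝ) * α ^ k :=
    Stmt17Aux.rep_of_op_pow α hα0 μ g hgkill
  -- the Φ argument : all coefficients of q lie in K
  have hbasis : ∀ i : ℕ, (Lagrange.basis (Finset.range μ) (Nat.cast : ℕ → K) i).map fK
      = Lagrange.basis (Finset.range μ) (Nat.cast : ℕ → ℝ) i := by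
    intro i
    unfold Lagrange.basis
    rw [Polynomial.map_prod]
    refine Finset.prod_congr rfl fun j _ => ?_
    unfold Lagrange.basisDivisor
    rw [Polynomial.map_mul, Polynomial.map_sub, Polynomial.map_X, Polynomial.map_C,
      Polynomial.map_C]
    rw [map_inv₀, map_sub, map_natCast, map_natCast]
  have hinterp_coeff : ∀ (w : ℕ → ℝ) (N : ℕ), (Stmt17Aux.interpQ α μ w).coeff N
      = ∑ i ∈ Finset.range μ, (w i * (α ^ i)⁻¹) *
        fK ((Lagrange.basis (Finset.range μ) (Nat.cast : ℕ → K) i).coeff N) := by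
    intro w N
    unfold Stmt17Aux.interpQ
    rw [Lagrange.interpolate_apply, Polynomial.finset_sum_coeff]
    refine Finset.sum_congr rfl fun i _ => ?_
    rw [Polynomial.coeff_C_mul, ← hbasis i, Polynomial.coeff_map]
  have hqK : ∀ N, q.coeff N ∈ K := by
    intro N
    apply Stmt17Aux.mem_of_forall_dual K
    intro Φ hΦ1
    have hΦsm : ∀ (κ : K) (x : ℝ), Φ (fK κ * x) = fK κ * Φ x := by
      intro κ x
      have h1 := Φ.map_smul κ x
      rwa [Algebra.smul_def, Algebra.smul_def] at h1
    set cΦ : ℕ → ℝ := fun k => Φ (A k) with hcΦ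
    -- boundedness
    have hcΦs : ∀ k, cΦ k = Φ (s (k + K₀)) := by
      intro k
      have h2 : A k = ((m (k + K₀) : ℤ) : ℝ) + s (k + K₀) := rfl
      have h3 : ((m (k + K₀) : ℤ) : ℝ) = (m (k + K₀)) • (1:ℝ) := by
        rw [zsmul_eq_mul, mul_one]
      rw [hcΦ]
      show Φ (A k) = _
      rw [h2, map_add, h3, map_zsmul, hΦ1, smul_zero, zero_add]
    obtain ⟨Mb, hMb⟩ := ((hSfin.image Φ).image abs).bddAbove
    have hcb : ∀ k, |cΦ k| ≤ Mb := by
      intro k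
      rw [hcΦs k]
      exact hMb (Set.mem_image_of_mem abs (Set.mem_image_of_mem Φ (hsS (k + K₀))))
    -- op commutes with Φ
    have hopΦ : ∀ (UK : Polynomial K) (c : ℕ → ℝ),
        Stmt17Aux.op (UK.map fK) (fun k => Φ (c k)) =
          fun k => Φ (Stmt17Aux.op (UK.map fK) c k) := by
      intro UK c
      funext k
      rw [Stmt17Aux.op_eq_sum]
      have h4 : Φ (Stmt17Aux.op (UK.map fK) c k)
          = ∑ j ∈ Finset.range ((UK.map fK).natDegree + 1),
              Φ ((UK.map fK).coeff j * c (k + j)) := by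
        rw [Stmt17Aux.op_eq_sum, map_sum]
      rw [h4]
      refine Finset.sum_congr rfl fun j _ => ?_
      rw [Polynomial.coeff_map]
      exact (hΦsm (UK.coeff j) (c (k + j))).symm
    have hrecΦ : Stmt17Aux.op RR cΦ = 0 := by
      have h5 := hopΦ RK A
      rw [hRKmap] at h5
      rw [hcΦ, h5, hrecA']
      funext k
      simp
    set gΦ : ℕ → ℝ := Stmt17Aux.op (Br * Tr) cΦ with hgΦ
    have hgΦg : gΦ = fun k => Φ (g k) := by
      have h6 := hopΦ (BK * TK) A
      rw [Polynomial.map_mul] at h6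
      rw [hgΦ, hcΦ, h6, hg]
    have hgΦkill : ∀ k, Stmt17Aux.op ((Polynomial.X - Polynomial.C α) ^ μ) gΦ k = 0 := by
      intro k
      have h7 : Stmt17Aux.op ((Polynomial.X - Polynomial.C α) ^ μ) gΦ
          = Stmt17Aux.op Br (Stmt17Aux.op RR cΦ) := by
        rw [hgΦ, ← Stmt17Aux.op_mul, ← Stmt17Aux.op_mul]
        congr 1
        rw [← hfactR]
        ring
      rw [h7, hrecΦ, Stmt17Aux.op_zero_seq]
      rfl
    set qΦ : Polynomial ℝ := Stmt17Aux.interpQ α μ gΦ with hqΦ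
    have hgΦq : ∀ k : ℕ, gΦ k = qΦ.eval (k : ℝ) * α ^ k :=
      Stmt17Aux.rep_of_op_pow α hα0 μ gΦ hgΦkill
    -- op Tr cΦ is bounded
    set M2 : ℝ := ∑ j ∈ Finset.range (Tr.natDegree + 1), |Tr.coeff j| * Mb with hM2
    have hTrb : ∀ k, |Stmt17Aux.op Tr cΦ k| ≤ M2 := by
      intro k
      rw [Stmt17Aux.op_eq_sum, hM2]
      refine (Finset.abs_sum_le_sum_abs _ _).trans ?_
      refine Finset.sum_le_sum fun j _ => ?_
      rw [abs_mul]
      exact mul_le_mul_of_nonneg_left (hcb (k + j)) (abs_nonneg _)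
    -- op Tr cΦ = twist Tr qΦ · α^k
    have hTdΦ : Stmt17Aux.op Tr (Stmt17Aux.op (Ar * (Polynomial.X - Polynomial.C α) ^ μ) cΦ)
        = 0 := by
      rw [← Stmt17Aux.op_mul]
      have h8 : Tr * (Ar * (Polynomial.X - Polynomial.C α) ^ μ) = Ar * RR := by
        rw [← hfactR]; ring
      rw [h8, Stmt17Aux.op_mul, hrecΦ, Stmt17Aux.op_zero_seq]
    have hcdg : cΦ = Stmt17Aux.op (Ar * (Polynomial.X - Polynomial.C α) ^ μ) cΦ + gΦ := by
      rw [hgΦ, ← Stmt17Aux.op_add, hbezR, Stmt17Aux.op_one]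
    have hTgΦ : Stmt17Aux.op Tr gΦ
        = fun k : ℕ => (Stmt17Aux.twist α Tr qΦ).eval (k : ℝ) * α ^ k := by
      have h9 : gΦ = fun k : ℕ => qΦ.eval (k : ℝ) * α ^ k := funext hgΦq
      rw [h9, Stmt17Aux.op_poly_mul_pow]
    have hTw : ∀ k : ℕ, (Stmt17Aux.twist α Tr qΦ).eval (k : ℝ) * α ^ k
        = Stmt17Aux.op Tr cΦ k := by
      intro k
      conv_rhs => rw [hcdg]
      rw [Stmt17Aux.op_add_seq, Pi.add_apply]
      rw [hTdΦ, hTgΦ]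
      simp
    have htwist0 : Stmt17Aux.twist α Tr qΦ = 0 := by
      apply Stmt17Aux.poly_eq_zero_of_mul_pow_bounded hα (M := M2)
      intro k
      rw [hTw k]
      exact hTrb k
    have hqΦ0 : qΦ = 0 := Stmt17Aux.eq_zero_of_twist_eq_zero α hTrα htwist0
    -- transfer to coefficients of q
    have h10 : Φ (q.coeff N) = qΦ.coeff N := by
      rw [hq, hinterp_coeff g N, hqΦ, hinterp_coeff gΦ N, map_sum]
      refine Finset.sum_congr rfl fun i _ => ?_
      have h11 : (α ^ i)⁻¹ = fK ((αK ^ i)⁻¹) := by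
        rw [map_inv₀, map_pow, hfKα]
      have h12 : g i * (α ^ i)⁻¹ *
            fK ((Lagrange.basis (Finset.range μ) (Nat.cast : ℕ → K) i).coeff N)
          = fK ((αK ^ i)⁻¹ * (Lagrange.basis (Finset.range μ) (Nat.cast : ℕ → K) i).coeff N)
              * g i := by
        rw [map_mul, ← h11]
        ring
      rw [h12, hΦsm]
      have h13 : Φ (g i) = gΦ i := by rw [hgΦg]
      rw [h13, map_mul, ← h11]
      ring
    rw [h10, hqΦ0, Polynomial.coeff_zero]
  -- final comparison
  set H : Polynomial ℝ := (α ^ K₀) • (F.comp (Polynomial.X + Polynomial.C (K₀ : ℝ))) with hH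
  have hHu : ∀ k : ℕ, u (k + K₀) = H.eval (k : ℝ) * α ^ k := by
    intro k
    rw [hH, Polynomial.eval_smul, Polynomial.eval_comp]
    simp only [Polynomial.eval_add, Polynomial.eval_X, Polynomial.eval_C, smul_eq_mul]
    rw [hu]
    push_cast
    ring
  have hfinal : H = q := by
    set d : ℕ → ℝ := Stmt17Aux.op (Ar * (Polynomial.X - Polynomial.C α) ^ μ) A with hd
    have hTd : Stmt17Aux.op Tr d = 0 := by
      rw [hd, ← Stmt17Aux.op_mul]
      have h8 : Tr * (Ar * (Polynomial.X - Polynomial.C α) ^ μ) = Ar * RR := by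
        rw [← hfactR]; ring
      rw [h8, Stmt17Aux.op_mul, hrecA', Stmt17Aux.op_zero_seq]
    have hadg : A = d + g := by
      rw [hd, hg, ← Stmt17Aux.op_add, hbezR, Stmt17Aux.op_one]
    have hTg : Stmt17Aux.op Tr g
        = fun k : ℕ => (Stmt17Aux.twist α Tr q).eval (k : ℝ) * α ^ k := by
      have h9 : g = fun k : ℕ => q.eval (k : ℝ) * α ^ k := funext hgq
      rw [h9, Stmt17Aux.op_poly_mul_pow]
    have hTu : Stmt17Aux.op Tr (fun k => u (k + K₀))
        = fun k : ℕ => (Stmt17Aux.twist α Tr H).eval (k : ℝ) * α ^ k := by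
      have h10 : (fun k : ℕ => u (k + K₀)) = fun k : ℕ => H.eval (k : ℝ) * α ^ k := funext hHu
      rw [h10, Stmt17Aux.op_poly_mul_pow]
    have hsub : (fun k : ℕ => u (k + K₀)) - A = fun k : ℕ => e (k + K₀) := by
      funext k
      have := hau (k + K₀)
      simp only [Pi.sub_apply, hA]
      rw [this]
      ring
    have hTe : Filter.Tendsto (Stmt17Aux.op Tr (fun k : ℕ => e (k + K₀)))
        Filter.atTop (𝓝 0) := by
      have heq : Stmt17Aux.op Tr (fun k : ℕ => e (k + K₀))
          = fun k => ∑ j ∈ Finset.range (Tr.natDegree + 1), Tr.coeff j * e ((k + j) + K₀) := by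
        funext k
        rw [Stmt17Aux.op_eq_sum]
      rw [heq]
      have hterm : ∀ j ∈ Finset.range (Tr.natDegree + 1),
          Filter.Tendsto (fun k => Tr.coeff j * e ((k + j) + K₀)) Filter.atTop (𝓝 0) := by
        intro j _
        have h1 : Filter.Tendsto (fun k : ℕ => e ((k + j) + K₀)) Filter.atTop (𝓝 0) := by
          have h2 := htend.comp (tendsto_add_atTop_nat (j + K₀))
          simpa [Function.comp_def, ← add_assoc] using h2
        simpa using h1.const_mul (Tr.coeff j)
      have := tendsto_finset_sum _ hterm
      simpa using this
    have hw : Filter.Tendsto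
        (fun k : ℕ => (Stmt17Aux.twist α Tr (H - q)).eval (k : ℝ) * α ^ k)
        Filter.atTop (𝓝 0) := by
      have h11 : Stmt17Aux.op Tr (fun k : ℕ => u (k + K₀)) - Stmt17Aux.op Tr A
          = Stmt17Aux.op Tr (fun k : ℕ => e (k + K₀)) := by
        rw [← Stmt17Aux.op_sub_seq, hsub]
      have h12 : Stmt17Aux.op Tr A
          = fun k : ℕ => (Stmt17Aux.twist α Tr q).eval (k : ℝ) * α ^ k := by
        rw [hadg, Stmt17Aux.op_add_seq, hTd, hTg]
        funext k
        simp
      have h13 : (fun k : ℕ => (Stmt17Aux.twist α Tr (H - q)).eval (k : ℝ) * α ^ k)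
          = Stmt17Aux.op Tr (fun k : ℕ => e (k + K₀)) := by
        rw [← h11, hTu, h12]
        funext k
        simp only [Pi.sub_apply]
        rw [Stmt17Aux.twist_sub, Polynomial.eval_sub]
        ring
      rw [h13]
      exact hTe
    have h0 : Stmt17Aux.twist α Tr (H - q) = 0 :=
      Stmt17Aux.poly_eq_zero_of_mul_pow_tendsto_zero hα hw
    have h14 : H - q = 0 := Stmt17Aux.eq_zero_of_twist_eq_zero α hTrα h0
    exact sub_eq_zero.mp h14
  -- conclude F has coefficients in K
  have hHK : ∀ N, H.coeff N ∈ K := by rw [hfinal]; exact hqK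
  have hFK : ∀ i, F.coeff i ∈ K := by
    have hlift : H ∈ Polynomial.lifts fK := by
      rw [Polynomial.lifts_iff_coeff_lifts]
      intro N
      exact ⟨⟨H.coeff N, hHK N⟩, rfl⟩
    obtain ⟨HK, hHKmap⟩ := (Polynomial.mem_lifts H).mp hlift
    have hXC : (Polynomial.X + Polynomial.C ((K₀ : ℕ) : ℝ)).comp
        (Polynomial.X - Polynomial.C ((K₀ : ℕ) : ℝ)) = Polynomial.X := by
      rw [Polynomial.add_comp, Polynomial.X_comp, Polynomial.C_comp, sub_add_cancel]
    have hcompF : F = (α ^ K₀)⁻¹ • (H.comp (Polynomial.X - Polynomial.C ((K₀ : ℕ) : ℝ))) := by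
      rw [hH, Polynomial.smul_comp, Polynomial.comp_assoc, hXC, Polynomial.comp_X,
        smul_smul, inv_mul_cancel₀ (pow_ne_zero _ hα0), one_smul]
    have hmapcomp : H.comp (Polynomial.X - Polynomial.C ((K₀ : ℕ) : ℝ))
        = (HK.comp (Polynomial.X - Polynomial.C ((K₀ : ℕ) : K))).map fK := by
      rw [Polynomial.map_comp, hHKmap, Polynomial.map_sub, Polynomial.map_X, Polynomial.map_C,
        map_natCast]
      norm_cast
    intro i
    rw [hcompF, Polynomial.coeff_smul, hmapcomp, Polynomial.coeff_map, smul_eq_mul]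
    refine mul_mem ?_ (SetLike.coe_mem _)
    exact inv_mem (pow_mem hαK K₀)
  obtain ⟨i, hi⟩ := hFnot
  exact hi (hFK i)
end
end
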